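/- arXiv:1210.6611 — 5 statements merged into one kernel-verified Lean document; each statement's English description precedes it below -/
import Mathlib

section
/- Let α ∈ (0,1), φ₁ > 0, and let f : [φ₁,∞) → (0,∞) be a nonincreasing C² function with f(φ) → 0 as φ → ∞. Assume there exist positive constants m, m̄, M₁, M₂, M₃ such that for all φ ≥ φ₁: m·φ^{−α} ≤ f(φ) ≤ m̄·φ^{−α}, M₁·φ^{−α−1} ≤ |f′(φ)| ≤ M₂·φ^{−α−1}, and |f″(φ)| ≤ M₃·φ^{−α}. Then the graph Γ of r = f(φ) in polar coordinates satisfies dim_B Γ = 2/(1+α), i.e. its lower and upper box dimensions both equal 2/(1+α). -/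
open Set Filter MeasureTheory Real

noncomputable section

/-- The Euclidean ε-neighborhood `A_ε = {y : dist(y, A) < ε}` of a set `A ⊆ ℝ²`
(with the Euclidean distance). -/
def euclNbhd (A : Set (ℝ × ℝ)) (ε : ℝ) : Set (ℝ × ℝ) :=
  {y | ∃ a ∈ A, Real.sqrt ((y.1 - a.1) ^ 2 + (y.2 - a.2) ^ 2) < ε}

/-- Lower `s`-dimensional Minkowski content of a set `A ⊆ ℝ²`:
`liminf_{ε→0⁺} vol₂(A_ε) / ε^{2-s}`. -/
def lowerMinkowskiContent (A : Set (ℝ × ℝ)) (s : ℝ) : ENNReal :=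
  Filter.liminf
    (fun ε : ℝ => MeasureTheory.volume (euclNbhd A ε) / ENNReal.ofReal (ε ^ (2 - s)))
    (nhdsWithin 0 (Set.Ioi 0))

/-- Upper `s`-dimensional Minkowski content of a set `A ⊆ ℝ²`:
`limsup_{ε→0⁺} vol₂(A_ε) / ε^{2-s}`. -/
def upperMinkowskiContent (A : Set (ℝ × ℝ)) (s : ℝ) : ENNReal :=
  Filter.limsup
    (fun ε : ℝ => MeasureTheory.volume (euclNbhd A ε) / ENNReal.ofReal (ε ^ (2 - s)))
    (nhdsWithin 0 (Set.Ioi 0))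

/-- Lower box dimension: `inf {s ≥ 0 : M_*^s(A) = 0}`. -/
def lowerBoxDim (A : Set (ℝ × ℝ)) : ℝ :=
  sInf {s : ℝ | 0 ≤ s ∧ lowerMinkowskiContent A s = 0}

/-- Upper box dimension: `inf {s ≥ 0 : M^{*s}(A) = 0}`. -/
def upperBoxDim (A : Set (ℝ × ℝ)) : ℝ :=
  sInf {s : ℝ | 0 ≤ s ∧ upperMinkowskiContent A s = 0}

end

set_option maxHeartbeats 1000000 in
theorem aux_eventually_small (δ : ℝ) (hδ : 0 < δ) (P : ℝ → Prop)
    (h : ∀ ε : ℝ, 0 < ε → ε < δ → P ε) : ∀ᶠ ε in nhdsWithin (0:ℝ) (Set.Ioi 0), P ε := by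
  filter_upwards [Ioo_mem_nhdsGT_of_mem (show (0:ℝ) ∈ Set.Ico 0 δ from ⟨le_refl _, hδ⟩)] with ε hε
  exact h ε hε.1 hε.2

theorem dims_eq_of_vol_bounds (A : Set (ℝ × ℝ)) (d : ℝ) (hd0 : 0 < d) (hd2 : d < 2)
    (c C ε₀ : ℝ) (hc : 0 < c) (hC : 0 < C) (hε₀ : 0 < ε₀)
    (hlow : ∀ ε : ℝ, 0 < ε → ε < ε₀ →
      ENNReal.ofReal (c * ε ^ (2 - d)) ≤ volume (euclNbhd A ε))
    (hup : ∀ ε : ℝ, 0 < ε → ε < ε₀ →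
      volume (euclNbhd A ε) ≤ ENNReal.ofReal (C * ε ^ (2 - d))) :
    lowerBoxDim A = d ∧ upperBoxDim A = d := by
  -- upper content vanishes for s > d
  have hupzero : ∀ s : ℝ, d < s → upperMinkowskiContent A s = 0 := by
    intro s hs
    refine le_antisymm ?_ zero_le
    refine ENNReal.le_of_forall_pos_le_add (fun η hη _ => ?_)
    rw [zero_add]
    have hηR : (0:ℝ) < η := hη
    set δ : ℝ := (η / C) ^ (1 / (s - d)) with hδdef
    have hsd : (0:ℝ) < s - d := by linarith
    have hδpos : 0 < δ := Real.rpow_pos_of_pos (by positivity) _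
    have hev : ∀ᶠ ε in nhdsWithin (0:ℝ) (Set.Ioi 0),
        volume (euclNbhd A ε) / ENNReal.ofReal (ε ^ (2 - s)) ≤ (η : ENNReal) := by
      refine aux_eventually_small (min ε₀ δ) (lt_min hε₀ hδpos) _ (fun ε hε hεlt => ?_)
      have hε1 : ε < ε₀ := lt_of_lt_of_le hεlt (min_le_left _ _)
      have hε2 : ε ≤ δ := le_of_lt (lt_of_lt_of_le hεlt (min_le_right _ _))
      have hb0 : ENNReal.ofReal (ε ^ (2 - s)) ≠ 0 := by
        simp [ENNReal.ofReal_eq_zero, not_le, Real.rpow_pos_of_pos hε]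
      rw [ENNReal.div_le_iff_le_mul (Or.inl hb0) (Or.inl ENNReal.ofReal_ne_top)]
      refine (hup ε hε hε1).trans ?_
      have hcoe : (η : ENNReal) = ENNReal.ofReal (η : ℝ) := by
        simp [ENNReal.ofReal_coe_nnreal]
      rw [hcoe, ← ENNReal.ofReal_mul hηR.le]
      apply ENNReal.ofReal_le_ofReal
      have key : ε ^ (s - d) ≤ η / C := by
        calc ε ^ (s - d) ≤ δ ^ (s - d) := Real.rpow_le_rpow hε.le hε2 hsd.le
        _ = η / C := by
            rw [hδdef, ← Real.rpow_mul (by positivity), one_div_mul_cancel hsd.ne', Real.rpow_one]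
      have hsplit : ε ^ (2 - d) = ε ^ (s - d) * ε ^ (2 - s) := by
        rw [← Real.rpow_add hε]; ring_nf
      rw [hsplit]
      calc C * (ε ^ (s - d) * ε ^ (2 - s)) ≤ C * ((η / C) * ε ^ (2 - s)) := by
            apply mul_le_mul_of_nonneg_left _ hC.le
            exact mul_le_mul_of_nonneg_right key (Real.rpow_pos_of_pos hε _).le
        _ = (η : ℝ) * ε ^ (2 - s) := by field_simp
    exact Filter.limsup_le_of_le (by isBoundedDefault) hev
  -- lower content is ≥ 1 for s < d
  have hlowpos : ∀ s : ℝ, s < d → (1 : ENNReal) ≤ lowerMinkowskiContent A s := by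
    intro s hs
    have hds : (0:ℝ) < d - s := by linarith
    set δ : ℝ := c ^ (1 / (d - s)) with hδdef
    have hδpos : 0 < δ := Real.rpow_pos_of_pos hc _
    refine Filter.le_liminf_of_le (by isBoundedDefault) ?_
    refine aux_eventually_small (min ε₀ δ) (lt_min hε₀ hδpos) _ (fun ε hε hεlt => ?_)
    have hε1 : ε < ε₀ := lt_of_lt_of_le hεlt (min_le_left _ _)
    have hε2 : ε ≤ δ := le_of_lt (lt_of_lt_of_le hεlt (min_le_right _ _))
    have hb0 : ENNReal.ofReal (ε ^ (2 - s)) ≠ 0 := by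
      simp [ENNReal.ofReal_eq_zero, not_le, Real.rpow_pos_of_pos hε]
    rw [ENNReal.le_div_iff_mul_le (Or.inl hb0) (Or.inl ENNReal.ofReal_ne_top), one_mul]
    refine le_trans ?_ (hlow ε hε hε1)
    apply ENNReal.ofReal_le_ofReal
    have key : ε ^ (d - s) ≤ c := by
      calc ε ^ (d - s) ≤ δ ^ (d - s) := Real.rpow_le_rpow hε.le hε2 hds.le
      _ = c := by
          rw [hδdef, ← Real.rpow_mul hc.le, one_div_mul_cancel hds.ne', Real.rpow_one]
    have hsplit : ε ^ (2 - s) = ε ^ (d - s) * ε ^ (2 - d) := by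
      rw [← Real.rpow_add hε]; ring_nf
    rw [hsplit]
    exact mul_le_mul_of_nonneg_right key (Real.rpow_pos_of_pos hε _).le
  have hsub : ∀ s : ℝ, 0 ≤ s ∧ upperMinkowskiContent A s = 0 →
      0 ≤ s ∧ lowerMinkowskiContent A s = 0 := by
    rintro s ⟨h0, hu⟩
    refine ⟨h0, le_antisymm ?_ zero_le⟩
    rw [← hu]
    exact Filter.liminf_le_limsup (by isBoundedDefault) (by isBoundedDefault)
  have hmemu : ∀ s : ℝ, d < s → (0 ≤ s ∧ upperMinkowskiContent A s = 0) :=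
    fun s hs => ⟨by linarith, hupzero s hs⟩
  have hgel : ∀ s : ℝ, (0 ≤ s ∧ lowerMinkowskiContent A s = 0) → d ≤ s := by
    rintro s ⟨h0, hl⟩
    by_contra hlt
    push_neg at hlt
    have := hlowpos s hlt
    rw [hl] at this
    simp at this
  constructor
  · refine le_antisymm ?_ ?_
    · calc sInf {s : ℝ | 0 ≤ s ∧ lowerMinkowskiContent A s = 0} ≤ sInf (Set.Ioi d) := by
            apply csInf_le_csInf ⟨d, fun x hx => hgel x hx⟩ ⟨d+1, by simp only [Set.mem_Ioi]; linarith⟩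
            exact fun s hs => hsub s (hmemu s hs)
        _ = d := csInf_Ioi
    · exact le_csInf ⟨d+1, hsub _ (hmemu _ (by linarith))⟩ (fun s hs => hgel s hs)
  · refine le_antisymm ?_ ?_
    · calc sInf {s : ℝ | 0 ≤ s ∧ upperMinkowskiContent A s = 0} ≤ sInf (Set.Ioi d) := by
            apply csInf_le_csInf ⟨d, fun x hx => hgel x (hsub x hx)⟩ ⟨d+1, by simp only [Set.mem_Ioi]; linarith⟩
            exact fun s hs => hmemu s hs
        _ = d := csInf_Ioi
    · exact le_csInf ⟨d+1, hmemu _ (by linarith)⟩ (fun s hs => hgel s (hsub s hs))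

set_option maxHeartbeats 1000000 in


theorem spiral_vol_lower (α φ₁ : ℝ) (hα0 : 0 < α) (hα1 : α < 1) (hφ₁ : 0 < φ₁)
    (f : ℝ → ℝ)
    (hf_smooth : ContDiffOn ℝ 2 f (Set.Ici φ₁))
    (hf_anti : AntitoneOn f (Set.Ici φ₁))
    (hf_lim : Filter.Tendsto f Filter.atTop (nhds 0))
    (m M₂ : ℝ) (hm : 0 < m) (hM₂ : 0 < M₂)
    (hfl : ∀ φ ≥ φ₁, m * φ ^ (-α) ≤ f φ)
    (hf' : ∀ φ ≥ φ₁, |derivWithin f (Set.Ici φ₁) φ| ≤ M₂ * φ ^ (-α - 1))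
    (Γ : Set (ℝ × ℝ))
    (hΓ : Γ = {P : ℝ × ℝ | ∃ φ ≥ φ₁, P = (f φ * Real.cos φ, f φ * Real.sin φ)}) :
    ∃ c > 0, ∃ ε₀ > 0, ∀ ε : ℝ, 0 < ε → ε < ε₀ →
      ENNReal.ofReal (c * ε ^ (2 - 2/(1+α))) ≤ volume (euclNbhd Γ ε) := by
  have h1α : (0:ℝ) < 1 + α := by linarith
  have hπ : (0:ℝ) < π := Real.pi_pos
  set B : ℝ := max φ₁ (2*π) + 1 with hB
  have hBpos : 0 < B := by positivity
  set c : ℝ := m^2 * 2 ^ (-(2*α)) * (4*π*M₂) ^ (-(2*α/(1+α))) with hc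
  have hcpos : 0 < c := by positivity
  refine ⟨c, hcpos, 4*π*M₂ / B ^ (1+α), by positivity, fun ε hε hεlt => ?_⟩
  have ha0 : 0 < 4*π*M₂/ε := by positivity
  set Ψ : ℝ := (4*π*M₂/ε) ^ (1/(1+α)) with hΨ
  have hΨpos : 0 < Ψ := Real.rpow_pos_of_pos ha0 _
  -- Ψ > B
  have hΨB : B < Ψ := by
    have h2 : B ^ (1+α) < 4*π*M₂/ε := by
      rw [lt_div_iff₀ hε]
      calc B ^ (1+α) * ε < B ^ (1+α) * (4*π*M₂ / B ^ (1+α)) := by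
            apply mul_lt_mul_of_pos_left hεlt (by positivity)
        _ = 4*π*M₂ := by field_simp
    calc B = (B ^ (1+α)) ^ (1/(1+α)) := by
          rw [← Real.rpow_mul hBpos.le, mul_one_div, div_self h1α.ne', Real.rpow_one]
      _ < Ψ := Real.rpow_lt_rpow (by positivity) h2 (by positivity)
  have hΨφ₁ : φ₁ < Ψ := lt_of_le_of_lt (by simp [hB]; nlinarith [le_max_left φ₁ (2*π)]) hΨB
  have hΨ2π : 2*π < Ψ := lt_of_le_of_lt (by simp [hB]; nlinarith [le_max_right φ₁ (2*π)]) hΨB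
  -- key power identity : Ψ ^ (-α-1) = ε / (4*π*M₂)
  have hΨpow : Ψ ^ (-α-1) = ε / (4*π*M₂) := by
    rw [hΨ, ← Real.rpow_mul ha0.le]
    have : 1/(1+α) * (-α-1) = -1 := by field_simp; ring
    rw [this, Real.rpow_neg_one, inv_div]
  -- derivative bound on Ici Ψ
  have hdiff : DifferentiableOn ℝ f (Set.Ici φ₁) :=
    hf_smooth.differentiableOn (by norm_num)
  have hderiv_eq : ∀ x : ℝ, φ₁ < x → derivWithin f (Set.Ici φ₁) x = deriv f x := by
    intro x hx
    exact derivWithin_of_mem_nhds (Ici_mem_nhds hx)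
  have hdbound : ∀ x ∈ Set.Ici Ψ, ‖derivWithin f (Set.Ici Ψ) x‖ ≤ M₂ * Ψ ^ (-α-1) := by
    intro x hx
    have hxφ₁ : φ₁ < x := lt_of_lt_of_le hΨφ₁ hx
    have hda : DifferentiableAt ℝ f x :=
      (hdiff x (le_of_lt hxφ₁)).differentiableAt (Ici_mem_nhds hxφ₁)
    rw [hda.derivWithin (uniqueDiffOn_Ici Ψ x hx), ← hderiv_eq x hxφ₁]
    have := hf' x (le_of_lt hxφ₁)
    refine le_trans this ?_
    apply mul_le_mul_of_nonneg_left _ hM₂.le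
    exact Real.rpow_le_rpow_of_nonpos hΨpos hx (by linarith)
  have hgap : ∀ ψ : ℝ, Ψ ≤ ψ → f ψ - f (ψ + 2*π) ≤ ε/2 := by
    intro ψ hψ
    have h2 : f ψ - f (ψ + 2*π) ≤ |f (ψ + 2*π) - f ψ| := by
      rw [abs_sub_comm]; exact le_abs_self _
    have h3 : ‖f (ψ + 2*π) - f ψ‖ ≤ (M₂ * Ψ ^ (-α-1)) * ‖(ψ + 2*π) - ψ‖ := by
      refine Convex.norm_image_sub_le_of_norm_derivWithin_le
        (hdiff.mono (Set.Ici_subset_Ici.2 hΨφ₁.le)) hdbound (convex_Ici Ψ) hψ ?_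
      simp only [Set.mem_Ici]; linarith
    have h4 : ‖(ψ + 2*π) - ψ‖ = 2*π := by
      simp [abs_of_nonneg, hπ.le]
    rw [h4] at h3
    calc f ψ - f (ψ + 2*π) ≤ (M₂ * Ψ ^ (-α-1)) * (2*π) := le_trans h2 h3
      _ = ε/2 := by rw [hΨpow]; field_simp; ring
  -- the radius
  set ρ : ℝ := m * (2*Ψ) ^ (-α) with hρ
  have hρpos : 0 < ρ := by positivity
  have hρf : ρ ≤ f (Ψ + 2*π) := by
    have h1 : Ψ + 2*π ≤ 2*Ψ := by linarith
    have h2 : (2*Ψ) ^ (-α) ≤ (Ψ + 2*π) ^ (-α) :=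
      Real.rpow_le_rpow_of_nonpos (by positivity) h1 (by linarith)
    calc ρ ≤ m * (Ψ + 2*π) ^ (-α) := mul_le_mul_of_nonneg_left h2 hm.le
      _ ≤ f (Ψ + 2*π) := hfl _ (by linarith)
  -- the square is inside the neighborhood
  have hsq : (Set.Icc (-(ρ/2)) (ρ/2) ×ˢ Set.Icc (-(ρ/2)) (ρ/2)) ⊆ euclNbhd Γ ε := by
    rintro ⟨x₁, x₂⟩ ⟨hx₁, hx₂⟩
    simp only [Set.mem_Icc] at hx₁ hx₂
    have hx₁' : |x₁| ≤ ρ/2 := abs_le.2 hx₁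
    have hx₂' : |x₂| ≤ ρ/2 := abs_le.2 hx₂
    have hrle : Real.sqrt (x₁^2 + x₂^2) ≤ ρ := by
      have h1 : x₁^2 + x₂^2 ≤ ρ^2 := by
        have := sq_abs x₁ ▸ pow_le_pow_left₀ (abs_nonneg x₁) hx₁' 2
        have := sq_abs x₂ ▸ pow_le_pow_left₀ (abs_nonneg x₂) hx₂' 2
        nlinarith [sq_abs x₁, sq_abs x₂, pow_le_pow_left₀ (abs_nonneg x₁) hx₁' 2,
          pow_le_pow_left₀ (abs_nonneg x₂) hx₂' 2]
      calc Real.sqrt (x₁^2 + x₂^2) ≤ Real.sqrt (ρ^2) := Real.sqrt_le_sqrt h1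
        _ = ρ := Real.sqrt_sq hρpos.le
    by_cases hzero : x₁ = 0 ∧ x₂ = 0
    · -- the origin : pick φ with f φ < ε
      obtain ⟨φ, hφ₁', hφε⟩ : ∃ φ ≥ φ₁, f φ < ε := by
        have := (hf_lim.eventually (eventually_lt_nhds hε)).and (eventually_ge_atTop φ₁)
        obtain ⟨φ, h1, h2⟩ := this.exists
        exact ⟨φ, h2, h1⟩
      refine ⟨(f φ * Real.cos φ, f φ * Real.sin φ), by rw [hΓ]; exact ⟨φ, hφ₁', rfl⟩, ?_⟩
      have hfφ : 0 < f φ :=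
        lt_of_lt_of_le (mul_pos hm (Real.rpow_pos_of_pos (lt_of_lt_of_le hφ₁ hφ₁') _)) (hfl φ hφ₁')
      have heq : (x₁ - f φ * Real.cos φ)^2 + (x₂ - f φ * Real.sin φ)^2 = (f φ)^2 := by
        rw [hzero.1, hzero.2]
        linear_combination (f φ)^2 * Real.sin_sq_add_cos_sq φ
      show Real.sqrt ((x₁ - f φ * Real.cos φ)^2 + (x₂ - f φ * Real.sin φ)^2) < ε
      rw [heq]
      rwa [Real.sqrt_sq hfφ.le]
    · -- general point
      have hr0 : 0 < x₁^2 + x₂^2 := by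
        rcases not_and_or.1 hzero with h | h
        · positivity
        · positivity
      set r : ℝ := Real.sqrt (x₁^2 + x₂^2) with hrdef
      have hrpos : 0 < r := Real.sqrt_pos.2 hr0
      set z : ℂ := ⟨x₁, x₂⟩ with hz
      have hzne : z ≠ 0 := by
        intro h
        apply hzero
        constructor
        · have := congrArg Complex.re h; simpa [hz] using this
        · have := congrArg Complex.im h; simpa [hz] using this
      have habs : ‖z‖ = r := by
        rw [Complex.norm_def, Complex.normSq_apply, hrdef]
        norm_num [hz]
        ring_nf
      set θ : ℝ := Complex.arg z with hθ
      have hcos : r * Real.cos θ = x₁ := by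
        have := Complex.norm_mul_cos_arg z
        rw [habs] at this; exact this
      have hsin : r * Real.sin θ = x₂ := by
        have := Complex.norm_mul_sin_arg z
        rw [habs] at this; exact this
      have hθle : θ ≤ π := Complex.arg_le_pi z
      -- crossing angles
      set k₀ : ℕ := ⌈(Ψ - θ)/(2*π)⌉₊ with hk₀
      set φk : ℕ → ℝ := fun k => θ + ((k₀ + k : ℕ) : ℝ) * (2*π) with hφk
      have hφkΨ : ∀ k, Ψ ≤ φk k := by
        intro k
        have h1 : (Ψ - θ)/(2*π) ≤ (k₀ : ℝ) := Nat.le_ceil _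
        have h2 : Ψ - θ ≤ (k₀:ℝ) * (2*π) := by
          rw [div_le_iff₀ (by positivity)] at h1; linarith
        have h3 : (k₀:ℝ) ≤ ((k₀ + k : ℕ):ℝ) := by exact_mod_cast Nat.le_add_right _ _
        have : (k₀:ℝ) * (2*π) ≤ ((k₀ + k : ℕ):ℝ) * (2*π) :=
          mul_le_mul_of_nonneg_right h3 (by positivity)
        simp only [hφk]; linarith
      have hφk0 : φk 0 ≤ Ψ + 2*π := by
        have harg : 0 ≤ (Ψ - θ)/(2*π) := by
          apply div_nonneg _ (by positivity)
          nlinarith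
        have h1 : (k₀ : ℝ) < (Ψ - θ)/(2*π) + 1 := Nat.ceil_lt_add_one harg
        have h2 : (k₀:ℝ) * (2*π) < (Ψ - θ) + 2*π := by
          rw [← sub_lt_iff_lt_add]
          calc (k₀:ℝ)*(2*π) - 2*π = ((k₀:ℝ) - 1)*(2*π) := by ring
            _ < (Ψ - θ)/(2*π) * (2*π) := by
                apply mul_lt_mul_of_pos_right _ (by positivity)
                linarith
            _ = Ψ - θ := by field_simp
        simp only [hφk, Nat.add_zero]
        push_cast
        linarith
      have hφkstep : ∀ k, φk (k+1) = φk k + 2*π := by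
        intro k; simp only [hφk]; push_cast; ring
      have hφkφ₁ : ∀ k, φ₁ ≤ φk k := fun k => le_trans hΨφ₁.le (hφkΨ k)
      -- find the last crossing with f ≥ r
      have hex : ∃ n, f (φk n) < r := by
        have htend : Filter.Tendsto (fun k => f (φk k)) Filter.atTop (nhds 0) := by
          apply hf_lim.comp
          apply Filter.tendsto_atTop_mono (f := fun k : ℕ => (k:ℝ) + (-4))
          · intro k
            have hθgt : -π < θ := Complex.neg_pi_lt_arg z
            have hk : (k:ℝ) ≤ ((k₀ + k : ℕ):ℝ) := by exact_mod_cast Nat.le_add_left _ _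
            have hπ4 : π < 4 := by have := Real.pi_lt_d2; linarith
            have : (k:ℝ) * (2*π) ≤ ((k₀ + k : ℕ):ℝ) * (2*π) :=
              mul_le_mul_of_nonneg_right hk (by positivity)
            have h5 : (k:ℝ) ≤ (k:ℝ)*(2*π) :=
              le_mul_of_one_le_right (Nat.cast_nonneg k) (by have := Real.pi_gt_three; linarith)
            simp only [hφk]
            linarith
          · exact Filter.tendsto_atTop_add_const_right _ _ tendsto_natCast_atTop_atTop
        exact ((htend.eventually (eventually_lt_nhds hrpos)).exists)
      set n₁ : ℕ := Nat.find hex with hn₁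
      have hn₁spec : f (φk n₁) < r := Nat.find_spec hex
      have hn₁pos : n₁ ≠ 0 := by
        intro h
        have h0 : r ≤ f (φk 0) := by
          calc r ≤ ρ := hrle
            _ ≤ f (Ψ + 2*π) := hρf
            _ ≤ f (φk 0) := hf_anti (hφkφ₁ 0) (by simp only [Set.mem_Ici]; linarith) hφk0
        rw [h] at hn₁spec; linarith
      set k : ℕ := n₁ - 1 with hkdef
      have hkn₁ : k + 1 = n₁ := Nat.succ_pred_eq_of_pos (Nat.pos_of_ne_zero hn₁pos)
      have hk1 : r ≤ f (φk k) := by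
        have := Nat.find_min hex (show k < n₁ by omega)
        linarith [not_lt.1 this]
      have hk2 : f (φk (k+1)) < r := by rw [hkn₁]; exact hn₁spec
      -- gap bound
      have hgapk : f (φk k) - f (φk (k+1)) ≤ ε/2 := by
        rw [hφkstep k]; exact hgap (φk k) (hφkΨ k)
      have hclose : |r - f (φk (k+1))| < ε := by
        rw [abs_of_pos (by linarith)]
        linarith
      -- the witness point on the spiral
      refine ⟨(f (φk (k+1)) * Real.cos (φk (k+1)), f (φk (k+1)) * Real.sin (φk (k+1))),
        by rw [hΓ]; exact ⟨φk (k+1), hφkφ₁ (k+1), rfl⟩, ?_⟩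
      have hcosk : Real.cos (φk (k+1)) = Real.cos θ := by
        simp only [hφk]
        have := Real.cos_add_int_mul_two_pi θ ((k₀ + (k+1) : ℕ) : ℤ)
        push_cast at this ⊢
        convert this using 2
      have hsink : Real.sin (φk (k+1)) = Real.sin θ := by
        simp only [hφk]
        have := Real.sin_add_int_mul_two_pi θ ((k₀ + (k+1) : ℕ) : ℤ)
        push_cast at this ⊢
        convert this using 2
      have hdist : (x₁ - f (φk (k+1)) * Real.cos (φk (k+1)))^2 +
          (x₂ - f (φk (k+1)) * Real.sin (φk (k+1)))^2 = (r - f (φk (k+1)))^2 := by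
        rw [hcosk, hsink, ← hcos, ← hsin]
        linear_combination (r - f (φk (k+1)))^2 * Real.sin_sq_add_cos_sq θ
      show Real.sqrt ((x₁ - f (φk (k+1)) * Real.cos (φk (k+1)))^2 +
          (x₂ - f (φk (k+1)) * Real.sin (φk (k+1)))^2) < ε
      rw [hdist, Real.sqrt_sq_eq_abs]
      exact hclose
  -- volume computation
  have hvol : volume (Set.Icc (-(ρ/2)) (ρ/2) ×ˢ Set.Icc (-(ρ/2)) (ρ/2)) =
      ENNReal.ofReal (ρ * ρ) := by
    rw [MeasureTheory.Measure.volume_eq_prod, MeasureTheory.Measure.prod_prod, Real.volume_Icc,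
      ← ENNReal.ofReal_mul (by linarith)]
    norm_num
  have hρsq : ρ * ρ = c * ε ^ (2 - 2/(1+α)) := by
    have hexp : 2 - 2/(1+α) = 2*α/(1+α) := by field_simp; ring
    have hΨ2α : Ψ ^ (-(2*α)) = (4*π*M₂) ^ (-(2*α/(1+α))) * ε ^ (2*α/(1+α)) := by
      rw [hΨ, ← Real.rpow_mul ha0.le]
      have h1 : 1/(1+α) * (-(2*α)) = -(2*α/(1+α)) := by field_simp
      rw [h1, Real.div_rpow (by positivity) hε.le, Real.rpow_neg hε.le (2*α/(1+α))]
      rw [div_inv_eq_mul]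
    have h2Ψ : (2*Ψ) ^ (-α) = 2 ^ (-α) * Ψ ^ (-α) :=
      Real.mul_rpow (by norm_num) hΨpos.le
    rw [hexp, hρ, h2Ψ, hc]
    have hΨsq : Ψ ^ (-α) * Ψ ^ (-α) = Ψ ^ (-(2*α)) := by
      rw [← Real.rpow_add hΨpos]; ring_nf
    have h2sq : (2:ℝ) ^ (-α) * 2 ^ (-α) = 2 ^ (-(2*α)) := by
      rw [← Real.rpow_add (by norm_num : (0:ℝ) < 2)]; ring_nf
    calc m * (2 ^ (-α) * Ψ ^ (-α)) * (m * (2 ^ (-α) * Ψ ^ (-α)))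
        = m^2 * (2 ^ (-α) * 2 ^ (-α)) * (Ψ ^ (-α) * Ψ ^ (-α)) := by ring
      _ = m^2 * 2 ^ (-(2*α)) * Ψ ^ (-(2*α)) := by rw [hΨsq, h2sq]
      _ = m^2 * 2 ^ (-(2*α)) * ((4*π*M₂) ^ (-(2*α/(1+α))) * ε ^ (2*α/(1+α))) := by rw [hΨ2α]
      _ = m^2 * 2 ^ (-(2*α)) * (4*π*M₂) ^ (-(2*α/(1+α))) * ε ^ (2*α/(1+α)) := by ring
  calc ENNReal.ofReal (c * ε ^ (2 - 2/(1+α))) = ENNReal.ofReal (ρ * ρ) := by rw [← hρsq]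
    _ = volume (Set.Icc (-(ρ/2)) (ρ/2) ×ˢ Set.Icc (-(ρ/2)) (ρ/2)) := hvol.symm
    _ ≤ volume (euclNbhd Γ ε) := measure_mono hsq

set_option maxHeartbeats 1000000 in


theorem spiral_vol_upper (α φ₁ : ℝ) (hα0 : 0 < α) (hα1 : α < 1) (hφ₁ : 0 < φ₁)
    (f : ℝ → ℝ)
    (hf_smooth : ContDiffOn ℝ 2 f (Set.Ici φ₁))
    (m' M₂ : ℝ) (hm' : 0 < m') (hM₂ : 0 < M₂)
    (hfpos : ∀ φ ≥ φ₁, 0 < f φ)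
    (hfu : ∀ φ ≥ φ₁, f φ ≤ m' * φ ^ (-α))
    (hf' : ∀ φ ≥ φ₁, |derivWithin f (Set.Ici φ₁) φ| ≤ M₂ * φ ^ (-α - 1))
    (Γ : Set (ℝ × ℝ))
    (hΓ : Γ = {P : ℝ × ℝ | ∃ φ ≥ φ₁, P = (f φ * Real.cos φ, f φ * Real.sin φ)}) :
    ∃ C > 0, ∃ ε₀ > 0, ∀ ε : ℝ, 0 < ε → ε < ε₀ →
      volume (euclNbhd Γ ε) ≤ ENNReal.ofReal (C * ε ^ (2 - 2/(1+α))) := by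
  have h1α : (0:ℝ) < 1 + α := by linarith
  have h1α' : (0:ℝ) < 1 - α := by linarith
  set K : ℝ := m' + M₂/φ₁ with hKdef
  have hK : 0 < K := by positivity
  set a : ℝ := α/(1+α) with hadef
  have ha : 0 < a := by positivity
  have ha1 : a < 1 := by rw [hadef, div_lt_one h1α]; linarith
  have hexp : 2 - 2/(1+α) = a + a := by rw [hadef]; field_simp; ring
  set C : ℝ := 4*(m'+1)^2 + 16*K/(1-α) + 16 with hCdef
  have hC : 0 < C := by positivity
  -- basic facts about f
  have hdiff : DifferentiableOn ℝ f (Set.Ici φ₁) :=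
    hf_smooth.differentiableOn (by norm_num)
  set d : ℝ → ℝ := fun t => derivWithin f (Set.Ici φ₁) t with hd
  have hfd : ∀ t ∈ Set.Ici φ₁, HasDerivWithinAt f (d t) (Set.Ici φ₁) t :=
    fun t ht => (hdiff t ht).hasDerivWithinAt
  have hfK : ∀ t ≥ φ₁, f t + |d t| ≤ K * t ^ (-α) := by
    intro t ht
    have htpos : 0 < t := lt_of_lt_of_le hφ₁ ht
    have h1 : f t ≤ m' * t ^ (-α) := hfu t ht
    have h2 : |d t| ≤ M₂ * t ^ (-α-1) := hf' t ht
    have h3 : t ^ (-α-1) = t ^ (-α) * t⁻¹ := by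
      rw [show -α-1 = -α + (-1) by ring, Real.rpow_add htpos, Real.rpow_neg_one]
    have h4 : t⁻¹ ≤ φ₁⁻¹ := inv_anti₀ hφ₁ ht
    have h5 : M₂ * t ^ (-α-1) ≤ M₂/φ₁ * t ^ (-α) := by
      rw [h3]
      calc M₂ * (t ^ (-α) * t⁻¹) ≤ M₂ * (t ^ (-α) * φ₁⁻¹) := by
            apply mul_le_mul_of_nonneg_left _ hM₂.le
            exact mul_le_mul_of_nonneg_left h4 (Real.rpow_pos_of_pos htpos _).le
        _ = M₂/φ₁ * t ^ (-α) := by field_simp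
    calc f t + |d t| ≤ m' * t ^ (-α) + M₂/φ₁ * t ^ (-α) := add_le_add h1 (le_trans h2 h5)
      _ = K * t ^ (-α) := by rw [hKdef]; ring
  -- the "arclength" comparison function
  set σ : ℝ → ℝ := fun t => K/(1-α) * t ^ (1-α) with hσdef
  have hσmono : ∀ x y : ℝ, 0 ≤ x → x ≤ y → σ x ≤ σ y := by
    intro x y hx hxy
    exact mul_le_mul_of_nonneg_left (Real.rpow_le_rpow hx hxy h1α'.le) (by positivity)
  have hσstrict : ∀ x y : ℝ, 0 ≤ x → x < y → σ x < σ y := by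
    intro x y hx hxy
    exact mul_lt_mul_of_pos_left (Real.rpow_lt_rpow hx hxy h1α') (by positivity)
  -- the Lipschitz-type estimate for the curve
  set γ : ℝ → ℝ × ℝ := fun t => (f t * Real.cos t, f t * Real.sin t) with hγdef
  have hγcont : ContinuousOn γ (Set.Ici φ₁) := by
    apply ContinuousOn.prodMk
    · exact hf_smooth.continuousOn.mul (Real.continuous_cos.continuousOn)
    · exact hf_smooth.continuousOn.mul (Real.continuous_sin.continuousOn)
  have hLip : ∀ ψ φ : ℝ, φ₁ ≤ ψ → ψ ≤ φ → ‖γ φ - γ ψ‖ ≤ σ φ - σ ψ := by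
    intro ψ φ hψ hψφ
    have key : ∀ x ∈ Set.Icc ψ φ, ‖γ x - γ ψ‖ ≤ σ x - σ ψ := by
      apply image_norm_le_of_norm_deriv_right_le_deriv_boundary'
        (f := fun t => γ t - γ ψ)
        (f' := fun t => (d t * Real.cos t + f t * -Real.sin t,
                         d t * Real.sin t + f t * Real.cos t))
        (B := fun t => σ t - σ ψ) (B' := fun t => K * t ^ (-α))
      · exact ((hγcont.mono (fun x hx => le_trans hψ hx.1)).sub continuousOn_const)
      · intro x hx
        have hxφ₁ : φ₁ ≤ x := le_trans hψ hx.1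
        have h1 : HasDerivWithinAt f (d x) (Set.Ici x) x :=
          (hfd x hxφ₁).mono (Set.Ici_subset_Ici.2 hxφ₁)
        have hcos : HasDerivWithinAt Real.cos (-Real.sin x) (Set.Ici x) x :=
          (Real.hasDerivAt_cos x).hasDerivWithinAt
        have hsin : HasDerivWithinAt Real.sin (Real.cos x) (Set.Ici x) x :=
          (Real.hasDerivAt_sin x).hasDerivWithinAt
        have hc1 : HasDerivWithinAt (fun t => f t * Real.cos t)
            (d x * Real.cos x + f x * -Real.sin x) (Set.Ici x) x := h1.mul hcos
        have hc2 : HasDerivWithinAt (fun t => f t * Real.sin t)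
            (d x * Real.sin x + f x * Real.cos x) (Set.Ici x) x := h1.mul hsin
        exact (hc1.prodMk hc2).sub_const (γ ψ)
      · simp
      · apply ContinuousOn.sub _ continuousOn_const
        apply ContinuousOn.mul continuousOn_const
        apply ContinuousOn.rpow_const continuousOn_id
        intro x hx
        exact Or.inl (ne_of_gt (lt_of_lt_of_le (lt_of_lt_of_le hφ₁ hψ) hx.1))
      · intro x hx
        have hxpos : 0 < x := lt_of_lt_of_le (lt_of_lt_of_le hφ₁ hψ) hx.1
        have h1 : HasDerivAt (fun t : ℝ => t ^ (1-α)) ((1-α) * x ^ (1-α-1)) x :=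
          Real.hasDerivAt_rpow_const (Or.inl hxpos.ne')
        have h2 : HasDerivAt (fun t : ℝ => K/(1-α) * t ^ (1-α))
            (K/(1-α) * ((1-α) * x ^ (1-α-1))) x := h1.const_mul (K/(1-α))
        have h3 : K/(1-α) * ((1-α) * x ^ (1-α-1)) = K * x ^ (-α) := by
          have he : (1:ℝ)-α-1 = -α := by ring
          rw [he]; field_simp
        rw [h3] at h2
        exact (h2.hasDerivWithinAt).sub_const (σ ψ)
      · intro x hx
        have hxφ₁ : φ₁ ≤ x := le_trans hψ hx.1
        have hbd := hfK x hxφ₁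
        have hfx : 0 < f x := hfpos x hxφ₁
        have hb1 : |d x * Real.cos x + f x * -Real.sin x| ≤ |d x| + f x := by
          calc |d x * Real.cos x + f x * -Real.sin x|
              ≤ |d x * Real.cos x| + |f x * -Real.sin x| := abs_add_le _ _
            _ = |d x| * |Real.cos x| + |f x| * |Real.sin x| := by
                rw [abs_mul, abs_mul, abs_neg]
            _ ≤ |d x| * 1 + |f x| * 1 := add_le_add
                (mul_le_mul_of_nonneg_left (Real.abs_cos_le_one x) (abs_nonneg _))
                (mul_le_mul_of_nonneg_left (Real.abs_sin_le_one x) (abs_nonneg _))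
            _ = |d x| + f x := by rw [abs_of_pos hfx]; ring
        have hb2 : |d x * Real.sin x + f x * Real.cos x| ≤ |d x| + f x := by
          calc |d x * Real.sin x + f x * Real.cos x|
              ≤ |d x * Real.sin x| + |f x * Real.cos x| := abs_add_le _ _
            _ = |d x| * |Real.sin x| + |f x| * |Real.cos x| := by rw [abs_mul, abs_mul]
            _ ≤ |d x| * 1 + |f x| * 1 := add_le_add
                (mul_le_mul_of_nonneg_left (Real.abs_sin_le_one x) (abs_nonneg _))
                (mul_le_mul_of_nonneg_left (Real.abs_cos_le_one x) (abs_nonneg _))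
            _ = |d x| + f x := by rw [abs_of_pos hfx]; ring
        rw [Prod.norm_def]
        simp only [Real.norm_eq_abs]
        exact max_le (le_trans hb1 (by linarith)) (le_trans hb2 (by linarith))
    exact key φ ⟨hψφ, le_refl φ⟩
  -- now the covering argument, for fixed ε
  refine ⟨C, hC, min 1 (φ₁ ^ (-(1+α))), lt_min one_pos (Real.rpow_pos_of_pos hφ₁ _),
    fun ε hε hεlt => ?_⟩
  have hε1 : ε < 1 := lt_of_lt_of_le hεlt (min_le_left _ _)
  have hεφ : ε < φ₁ ^ (-(1+α)) := lt_of_lt_of_le hεlt (min_le_right _ _)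
  set Φ : ℝ := ε ^ (-(1/(1+α))) with hΦdef
  have hΦpos : 0 < Φ := Real.rpow_pos_of_pos hε _
  have hΦφ₁ : φ₁ ≤ Φ := by
    have hz : -(1/(1+α)) < 0 := by
      rw [neg_lt_zero]; positivity
    have h1 : (φ₁ ^ (-(1+α))) ^ (-(1/(1+α))) < Φ :=
      Real.rpow_lt_rpow_of_neg hε hεφ hz
    have h2 : (φ₁ ^ (-(1+α))) ^ (-(1/(1+α))) = φ₁ := by
      rw [← Real.rpow_mul hφ₁.le]
      have he : (-(1+α)) * (-(1/(1+α))) = 1 := by field_simp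
      rw [he, Real.rpow_one]
    rw [h2] at h1
    exact h1.le
  have hΦa : Φ ^ (-α) = ε ^ a := by
    rw [hΦdef, ← Real.rpow_mul hε.le]
    congr 1
    rw [hadef]; field_simp
  have hE : 0 < ε ^ a := Real.rpow_pos_of_pos hε a
  have hσΦε : σ Φ * ε = K/(1-α) * (ε ^ a * ε ^ a) := by
    have h1 : Φ ^ (1-α) = ε ^ (-((1-α)/(1+α))) := by
      rw [hΦdef, ← Real.rpow_mul hε.le]
      congr 1
      field_simp
    have h2 : ε ^ (-((1-α)/(1+α))) * ε = ε ^ a * ε ^ a := by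
      nth_rewrite 2 [← Real.rpow_one ε]
      rw [← Real.rpow_add hε, ← Real.rpow_add hε]
      congr 1
      rw [hadef]; field_simp; ring
    calc σ Φ * ε = K/(1-α) * (Φ ^ (1-α) * ε) := by rw [hσdef]; ring
      _ = K/(1-α) * (ε ^ a * ε ^ a) := by rw [h1, h2]
  -- partition points
  set N : ℕ := ⌊(σ Φ - σ φ₁)/ε⌋₊ with hNdef
  set t : ℕ → ℝ := fun i => ((1-α)/K * (i*ε) + φ₁ ^ (1-α)) ^ (1/(1-α)) with htdef
  have htarg : ∀ i : ℕ, (0:ℝ) ≤ (1-α)/K * (i*ε) + φ₁ ^ (1-α) := by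
    intro i; positivity
  have hti_ge : ∀ i : ℕ, φ₁ ≤ t i := by
    intro i
    have h1 : φ₁ ^ (1-α) ≤ (1-α)/K * (i*ε) + φ₁ ^ (1-α) := by
      have h0 : (0:ℝ) ≤ (1-α)/K * (i*ε) := by positivity
      linarith
    have h2 : (φ₁ ^ (1-α)) ^ (1/(1-α)) ≤ t i :=
      Real.rpow_le_rpow (by positivity) h1 (by positivity)
    have h3 : (φ₁ ^ (1-α)) ^ (1/(1-α)) = φ₁ := by
      rw [← Real.rpow_mul hφ₁.le]
      have he : (1-α) * (1/(1-α)) = 1 := by field_simp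
      rw [he, Real.rpow_one]
    rw [h3] at h2
    exact h2
  have hσt : ∀ i : ℕ, σ (t i) = i*ε + σ φ₁ := by
    intro i
    have h1 : (t i) ^ (1-α) = (1-α)/K * (i*ε) + φ₁ ^ (1-α) := by
      rw [htdef]
      rw [← Real.rpow_mul (htarg i)]
      have he : 1/(1-α) * (1-α) = 1 := by field_simp
      rw [he, Real.rpow_one]
    show K/(1-α) * (t i) ^ (1-α) = i*ε + K/(1-α) * φ₁ ^ (1-α)
    rw [h1]
    field_simp
  -- the covering sets
  set R : ℝ := m' * ε ^ a + ε with hRdef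
  have hRpos : 0 < R := by positivity
  set T : Set (ℝ × ℝ) := Set.Icc (-R) R ×ˢ Set.Icc (-R) R with hTdef
  set Q : ℕ → Set (ℝ × ℝ) := fun i =>
    Set.Icc (f (t i) * Real.cos (t i) - 2*ε) (f (t i) * Real.cos (t i) + 2*ε) ×ˢ
    Set.Icc (f (t i) * Real.sin (t i) - 2*ε) (f (t i) * Real.sin (t i) + 2*ε) with hQdef
  have hcover : euclNbhd Γ ε ⊆ T ∪ ⋃ i ∈ Finset.range (N+1), Q i := by
    rintro ⟨x₁, x₂⟩ ⟨p, hpΓ, hdist⟩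
    rw [hΓ] at hpΓ
    obtain ⟨φ, hφ, hp⟩ := hpΓ
    subst hp
    change Real.sqrt ((x₁ - f φ * Real.cos φ)^2 + (x₂ - f φ * Real.sin φ)^2) < ε at hdist
    have hsq1 : |x₁ - f φ * Real.cos φ| < ε := by
      have h1 : (x₁ - f φ * Real.cos φ)^2 ≤
          (x₁ - f φ * Real.cos φ)^2 + (x₂ - f φ * Real.sin φ)^2 := by
        nlinarith [sq_nonneg (x₂ - f φ * Real.sin φ)]
      calc |x₁ - f φ * Real.cos φ| = Real.sqrt ((x₁ - f φ * Real.cos φ)^2) :=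
            (Real.sqrt_sq_eq_abs _).symm
        _ ≤ Real.sqrt ((x₁ - f φ * Real.cos φ)^2 + (x₂ - f φ * Real.sin φ)^2) :=
            Real.sqrt_le_sqrt h1
        _ < ε := hdist
    have hsq2 : |x₂ - f φ * Real.sin φ| < ε := by
      have h1 : (x₂ - f φ * Real.sin φ)^2 ≤
          (x₁ - f φ * Real.cos φ)^2 + (x₂ - f φ * Real.sin φ)^2 := by
        nlinarith [sq_nonneg (x₁ - f φ * Real.cos φ)]
      calc |x₂ - f φ * Real.sin φ| = Real.sqrt ((x₂ - f φ * Real.sin φ)^2) :=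
            (Real.sqrt_sq_eq_abs _).symm
        _ ≤ Real.sqrt ((x₁ - f φ * Real.cos φ)^2 + (x₂ - f φ * Real.sin φ)^2) :=
            Real.sqrt_le_sqrt h1
        _ < ε := hdist
    have hfφ0 : 0 < f φ := hfpos φ hφ
    by_cases hφΦ : Φ ≤ φ
    · left
      have hfφ : f φ ≤ m' * ε ^ a := by
        calc f φ ≤ m' * φ ^ (-α) := hfu φ hφ
          _ ≤ m' * Φ ^ (-α) := mul_le_mul_of_nonneg_left
              (Real.rpow_le_rpow_of_nonpos hΦpos hφΦ (by linarith)) hm'.le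
          _ = m' * ε ^ a := by rw [hΦa]
      have hb1 : |f φ * Real.cos φ| ≤ m' * ε ^ a := by
        rw [abs_mul]
        calc |f φ| * |Real.cos φ| ≤ |f φ| * 1 :=
              mul_le_mul_of_nonneg_left (Real.abs_cos_le_one φ) (abs_nonneg _)
          _ = f φ := by rw [abs_of_pos hfφ0]; ring
          _ ≤ m' * ε ^ a := hfφ
      have hb2 : |f φ * Real.sin φ| ≤ m' * ε ^ a := by
        rw [abs_mul]
        calc |f φ| * |Real.sin φ| ≤ |f φ| * 1 :=
              mul_le_mul_of_nonneg_left (Real.abs_sin_le_one φ) (abs_nonneg _)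
          _ = f φ := by rw [abs_of_pos hfφ0]; ring
          _ ≤ m' * ε ^ a := hfφ
      have hx1 : |x₁| ≤ R := by
        calc |x₁| ≤ |x₁ - f φ * Real.cos φ| + |f φ * Real.cos φ| := by
              have h := abs_add_le (x₁ - f φ * Real.cos φ) (f φ * Real.cos φ)
              simpa using h
          _ ≤ ε + m' * ε ^ a := add_le_add hsq1.le hb1
          _ = R := by rw [hRdef]; ring
      have hx2 : |x₂| ≤ R := by
        calc |x₂| ≤ |x₂ - f φ * Real.sin φ| + |f φ * Real.sin φ| := by
              have h := abs_add_le (x₂ - f φ * Real.sin φ) (f φ * Real.sin φ)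
              simpa using h
          _ ≤ ε + m' * ε ^ a := add_le_add hsq2.le hb2
          _ = R := by rw [hRdef]; ring
      exact ⟨Set.mem_Icc.2 (abs_le.1 hx1), Set.mem_Icc.2 (abs_le.1 hx2)⟩
    · push_neg at hφΦ
      set i : ℕ := ⌊(σ φ - σ φ₁)/ε⌋₊ with hidef
      have hφ0 : (0:ℝ) ≤ φ := le_trans hφ₁.le hφ
      have hσφ₁φ : σ φ₁ ≤ σ φ := hσmono φ₁ φ hφ₁.le hφ
      have hnn : 0 ≤ (σ φ - σ φ₁)/ε := div_nonneg (by linarith) hε.le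
      have hiN : i ≤ N := by
        apply Nat.floor_le_floor
        gcongr
        exact hσmono φ Φ hφ0 hφΦ.le
      have hσt_le : σ (t i) ≤ σ φ := by
        rw [hσt i]
        have h1 : (i:ℝ) ≤ (σ φ - σ φ₁)/ε := Nat.floor_le hnn
        rw [le_div_iff₀ hε] at h1
        linarith
      have hti_le : t i ≤ φ := by
        by_contra hcon
        push_neg at hcon
        exact absurd (hσstrict φ (t i) hφ0 hcon) (not_lt.2 hσt_le)
      have hgapσ : σ φ - σ (t i) ≤ ε := by
        rw [hσt i]
        have h2 : (σ φ - σ φ₁)/ε < (i:ℝ) + 1 := Nat.lt_floor_add_one _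
        rw [div_lt_iff₀ hε] at h2
        linarith
      have hLipi : ‖γ φ - γ (t i)‖ ≤ ε :=
        le_trans (hLip (t i) φ (hti_ge i) hti_le) (by linarith)
      have hcomp1 : |f φ * Real.cos φ - f (t i) * Real.cos (t i)| ≤ ε := by
        have h := norm_fst_le (γ φ - γ (t i))
        rw [Prod.fst_sub] at h
        simp only [hγdef, Real.norm_eq_abs] at h
        exact le_trans h hLipi
      have hcomp2 : |f φ * Real.sin φ - f (t i) * Real.sin (t i)| ≤ ε := by
        have h := norm_snd_le (γ φ - γ (t i))
        rw [Prod.snd_sub] at h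
        simp only [hγdef, Real.norm_eq_abs] at h
        exact le_trans h hLipi
      have hx1 : |x₁ - f (t i) * Real.cos (t i)| ≤ 2*ε := by
        calc |x₁ - f (t i) * Real.cos (t i)|
            ≤ |x₁ - f φ * Real.cos φ| + |f φ * Real.cos φ - f (t i) * Real.cos (t i)| :=
              abs_sub_le _ _ _
          _ ≤ ε + ε := add_le_add hsq1.le hcomp1
          _ = 2*ε := by ring
      have hx2 : |x₂ - f (t i) * Real.sin (t i)| ≤ 2*ε := by
        calc |x₂ - f (t i) * Real.sin (t i)|
            ≤ |x₂ - f φ * Real.sin φ| + |f φ * Real.sin φ - f (t i) * Real.sin (t i)| :=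
              abs_sub_le _ _ _
          _ ≤ ε + ε := add_le_add hsq2.le hcomp2
          _ = 2*ε := by ring
      right
      refine Set.mem_biUnion (Finset.mem_range.2 (Nat.lt_succ_of_le hiN)) ?_
      have h1 := abs_le.1 hx1
      have h2 := abs_le.1 hx2
      exact ⟨Set.mem_Icc.2 ⟨by linarith [h1.1], by linarith [h1.2]⟩,
             Set.mem_Icc.2 ⟨by linarith [h2.1], by linarith [h2.2]⟩⟩
  -- volumes
  have hvolT : volume T = ENNReal.ofReal ((2*R)*(2*R)) := by
    rw [hTdef, MeasureTheory.Measure.volume_eq_prod, MeasureTheory.Measure.prod_prod,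
      Real.volume_Icc, ← ENNReal.ofReal_mul (by linarith)]
    congr 1
    ring
  have hvolQ : ∀ i : ℕ, volume (Q i) = ENNReal.ofReal ((4*ε)*(4*ε)) := by
    intro i
    simp only [hQdef]
    rw [MeasureTheory.Measure.volume_eq_prod, MeasureTheory.Measure.prod_prod,
      Real.volume_Icc, Real.volume_Icc, ← ENNReal.ofReal_mul (by linarith)]
    congr 1
    ring
  have hsum : volume (euclNbhd Γ ε) ≤
      ENNReal.ofReal ((2*R)*(2*R)) + (N+1 : ℕ) * ENNReal.ofReal ((4*ε)*(4*ε)) := by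
    calc volume (euclNbhd Γ ε) ≤ volume (T ∪ ⋃ i ∈ Finset.range (N+1), Q i) :=
          measure_mono hcover
      _ ≤ volume T + volume (⋃ i ∈ Finset.range (N+1), Q i) := measure_union_le _ _
      _ ≤ volume T + ∑ i ∈ Finset.range (N+1), volume (Q i) := by
          gcongr
          exact measure_biUnion_finset_le _ _
      _ = ENNReal.ofReal ((2*R)*(2*R)) + (N+1 : ℕ) * ENNReal.ofReal ((4*ε)*(4*ε)) := by
          rw [hvolT]
          congr 1
          rw [Finset.sum_congr rfl (fun i _ => hvolQ i), Finset.sum_const,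
            Finset.card_range, nsmul_eq_mul]
  -- the real-number estimate
  have hNR : (N:ℝ) ≤ σ Φ / ε := by
    have h0 : 0 < σ φ₁ := mul_pos (by positivity) (Real.rpow_pos_of_pos hφ₁ _)
    have hnn : 0 ≤ (σ Φ - σ φ₁)/ε := by
      apply div_nonneg _ hε.le
      have := hσmono φ₁ Φ hφ₁.le hΦφ₁
      linarith
    calc (N:ℝ) ≤ (σ Φ - σ φ₁)/ε := Nat.floor_le hnn
      _ ≤ σ Φ / ε := by gcongr <;> linarith
  have hreal : (2*R)*(2*R) + ((N:ℝ)+1) * ((4*ε)*(4*ε)) ≤ C * ε ^ (2 - 2/(1+α)) := by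
    have hεa : ε ≤ ε ^ a := by
      nth_rewrite 1 [← Real.rpow_one ε]
      exact Real.rpow_le_rpow_of_exponent_ge hε hε1.le ha1.le
    have hRle : R ≤ (m'+1) * ε ^ a := by rw [hRdef]; nlinarith
    have h1 : (2*R)*(2*R) ≤ 4*(m'+1)^2 * (ε^a * ε^a) := by nlinarith [hRpos.le, hE.le]
    have hNε : (N:ℝ) * (ε*ε) ≤ σ Φ * ε := by
      have h := mul_le_mul_of_nonneg_right hNR (mul_pos hε hε).le
      calc (N:ℝ)*(ε*ε) ≤ σ Φ / ε * (ε*ε) := h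
        _ = σ Φ * ε := by field_simp
    have hεε : ε*ε ≤ ε^a*ε^a := mul_le_mul hεa hεa hε.le hE.le
    have h2 : ((N:ℝ)+1) * ((4*ε)*(4*ε)) ≤ 16*(K/(1-α))*(ε^a*ε^a) + 16*(ε^a*ε^a) := by
      have hσ := hσΦε
      nlinarith [hNε, (Nat.cast_nonneg N : (0:ℝ) ≤ (N:ℝ))]
    calc (2*R)*(2*R) + ((N:ℝ)+1) * ((4*ε)*(4*ε))
        ≤ 4*(m'+1)^2 * (ε^a * ε^a) + (16*(K/(1-α))*(ε^a*ε^a) + 16*(ε^a*ε^a)) :=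
          add_le_add h1 h2
      _ = C * ε ^ (a + a) := by rw [Real.rpow_add hε, hCdef]; ring
      _ = C * ε ^ (2 - 2/(1+α)) := by rw [hexp]
  calc volume (euclNbhd Γ ε)
      ≤ ENNReal.ofReal ((2*R)*(2*R)) + (N+1 : ℕ) * ENNReal.ofReal ((4*ε)*(4*ε)) := hsum
    _ = ENNReal.ofReal ((2*R)*(2*R) + ((N:ℝ)+1) * ((4*ε)*(4*ε))) := by
        rw [← ENNReal.ofReal_natCast (N+1), ← ENNReal.ofReal_mul (by positivity),
          ← ENNReal.ofReal_add (by positivity) (by positivity)]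
        congr 2
        push_cast
        ring
    _ ≤ ENNReal.ofReal (C * ε ^ (2 - 2/(1+α))) := ENNReal.ofReal_le_ofReal hreal


/-- Box dimension of a smooth nonincreasing spiral
(Theorem 5 of Žubrinić–Županović, cited as Theorem `ffa`). -/
theorem box_dimension_of_smooth_spiral
    (α φ₁ : ℝ) (hα : α ∈ Set.Ioo (0 : ℝ) 1) (hφ₁ : 0 < φ₁)
    (f : ℝ → ℝ)
    (hf_pos : ∀ φ ≥ φ₁, 0 < f φ)
    (hf_smooth : ContDiffOn ℝ 2 f (Set.Ici φ₁))
    (hf_anti : AntitoneOn f (Set.Ici φ₁))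
    (hf_lim : Filter.Tendsto f Filter.atTop (nhds 0))
    (m m' M₁ M₂ M₃ : ℝ)
    (hm : 0 < m) (hm' : 0 < m') (hM₁ : 0 < M₁) (hM₂ : 0 < M₂) (hM₃ : 0 < M₃)
    (hf_bound : ∀ φ ≥ φ₁, m * φ ^ (-α) ≤ f φ ∧ f φ ≤ m' * φ ^ (-α))
    (hf'_bound : ∀ φ ≥ φ₁,
      M₁ * φ ^ (-α - 1) ≤ |derivWithin f (Set.Ici φ₁) φ| ∧
      |derivWithin f (Set.Ici φ₁) φ| ≤ M₂ * φ ^ (-α - 1))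
    (hf''_bound : ∀ φ ≥ φ₁,
      |derivWithin (derivWithin f (Set.Ici φ₁)) (Set.Ici φ₁) φ| ≤ M₃ * φ ^ (-α))
    (Γ : Set (ℝ × ℝ))
    (hΓ : Γ = {P : ℝ × ℝ | ∃ φ ≥ φ₁, P = (f φ * Real.cos φ, f φ * Real.sin φ)}) :
    lowerBoxDim Γ = 2 / (1 + α) ∧ upperBoxDim Γ = 2 / (1 + α) := by
  obtain ⟨hα0, hα1⟩ := hα
  obtain ⟨c, hc, ε₁, hε₁, hlow⟩ := spiral_vol_lower α φ₁ hα0 hα1 hφ₁ f hf_smooth hf_anti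
    hf_lim m M₂ hm hM₂ (fun φ hφ => (hf_bound φ hφ).1) (fun φ hφ => (hf'_bound φ hφ).2) Γ hΓ
  obtain ⟨C, hC, ε₂, hε₂, hup⟩ := spiral_vol_upper α φ₁ hα0 hα1 hφ₁ f hf_smooth m' M₂ hm' hM₂
    hf_pos (fun φ hφ => (hf_bound φ hφ).2) (fun φ hφ => (hf'_bound φ hφ).2) Γ hΓ
  have h1α : (0:ℝ) < 1 + α := by linarith
  have hd0 : 0 < 2/(1+α) := by positivity
  have hd2 : 2/(1+α) < 2 := by rw [div_lt_iff₀ h1α]; nlinarith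
  exact dims_eq_of_vol_bounds Γ (2/(1+α)) hd0 hd2 c C (min ε₁ ε₂) hc hC (lt_min hε₁ hε₂)
    (fun ε hε hlt => hlow ε hε (lt_of_lt_of_le hlt (min_le_left _ _)))
    (fun ε hε hlt => hup ε hε (lt_of_lt_of_le hlt (min_le_right _ _)))
end

section
/- Let t₀ > 0, α ∈ (0,1), ε > 0, and let r : [t₀,∞) → (0,∞) be a C¹ function with r′(t₀) ≤ 0. Suppose there is a sequence (tₙ)ₙ≥₁, defined inductively with t₀ as starting value by t_{2k+1} = inf{t > t_{2k} : r′(t) > 0} and t_{2k+2} = inf{t > t_{2k+1} : r(t) = r(t_{2k+1})} for k ≥ 0 (all these sets being nonempty), which is strictly increasing with tₙ → ∞, satisfies t_{2k+1} − t_{2k} ≥ ε for all k ≥ 0, and such that osc_{t∈[t_{2k+1},t_{2k+2}]} r(t) = o(t_{2k+1}^{−α−1}) as k → ∞, where osc_{t∈I} r(t) = max_{t∈I} r(t) − min_{t∈I} r(t). Let φ₀ > 0 and let φ : [t₀,∞) → [φ₀,∞) be an increasing C¹ bijection with φ(t₀) = φ₀, and suppose there exists φ̄₀ ∈ ℝ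 such that (φ(t) − φ̄₀) − (t − t₀) → 0 as t → ∞. Let f : [φ₀,∞) → (0,∞) be the differentiable function determined by f(φ(t)) = r(t), and assume the graph Γ′ of r = f(φ) in polar coordinates is a spiral: f(φ) → 0 as φ → ∞ and for every fixed φ ≥ φ₀ the sequence k ↦ f(φ + 2kπ) is strictly decreasing. Let ε′ be such that 0 < ε′ < ε and set θ = min{ε′, π}. Assume there exist positive constants m, m̄, a′, M such that for all φ ≥ φ₀: m·φ^{−α} ≤ f(φ) ≤ m̄·φ^{−α}, |f′(φ)| ≤ M·φ^{−α−1}, and a′·φ^{−α−1} ≤ f(φ) − f(φ + Δφ) for every Δφ with θ ≤ Δφ ≤ 2π + θ. Then dim_B Γ′ = 2/(1+α), i.e. the lower and upper box dimensions of Γ′ both equal 2/(1+α). -/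
open Set Filter MeasureTheory Real

set_option maxHeartbeats 1000000 in
lemma dim_from_bounds (A : Set (ℝ × ℝ)) (d C c : ℝ) (hd : 0 < d) (hC : 0 < C) (hc : 0 < c)
    (hup : ∀ᶠ e in nhdsWithin (0:ℝ) (Set.Ioi 0),
      MeasureTheory.volume (euclNbhd A e) ≤ ENNReal.ofReal (C * e ^ (2 - d)))
    (hlo : ∀ᶠ e in nhdsWithin (0:ℝ) (Set.Ioi 0),
      ENNReal.ofReal (c * e ^ (2 - d)) ≤ MeasureTheory.volume (euclNbhd A e)) :
    lowerBoxDim A = d ∧ upperBoxDim A = d := by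
  set L := nhdsWithin (0:ℝ) (Set.Ioi 0) with hL
  have hLne : L.NeBot := nhdsGT_neBot 0
  -- contents are zero above d
  have key1 : ∀ s : ℝ, d < s → upperMinkowskiContent A s = 0 := by
    intro s hs
    have hbound : ∀ᶠ e in L,
        MeasureTheory.volume (euclNbhd A e) / ENNReal.ofReal (e ^ (2 - s))
          ≤ ENNReal.ofReal (C * e ^ (s - d)) := by
      filter_upwards [hup, self_mem_nhdsWithin] with e h1 h2
      have he : (0:ℝ) < e := h2
      calc MeasureTheory.volume (euclNbhd A e) / ENNReal.ofReal (e ^ (2 - s))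
          ≤ ENNReal.ofReal (C * e ^ (2 - d)) / ENNReal.ofReal (e ^ (2 - s)) :=
            ENNReal.div_le_div_right h1 _
        _ = ENNReal.ofReal ((C * e ^ (2 - d)) / e ^ (2 - s)) :=
            (ENNReal.ofReal_div_of_pos (Real.rpow_pos_of_pos he _)).symm
        _ = ENNReal.ofReal (C * e ^ (s - d)) := by
            rw [mul_div_assoc, ← Real.rpow_sub he]
            ring_nf
    have htR : Filter.Tendsto (fun e : ℝ => C * e ^ (s - d)) L (nhds 0) := by
      have h0 : Filter.Tendsto (fun e : ℝ => e ^ (s - d)) (nhds 0) (nhds ((0:ℝ) ^ (s - d))) :=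
        (Real.continuousAt_rpow_const 0 (s - d) (Or.inr (by linarith))).tendsto
      rw [Real.zero_rpow (by linarith : s - d ≠ 0)] at h0
      have := (h0.mono_left (nhdsWithin_le_nhds (s := Set.Ioi 0))).const_mul C
      simpa using this
    have htend : Filter.Tendsto (fun e : ℝ => ENNReal.ofReal (C * e ^ (s - d))) L (nhds 0) := by
      have := (ENNReal.continuous_ofReal.tendsto 0).comp htR
      simpa [Function.comp_def] using this
    have := Filter.limsup_le_limsup hbound
    rw [htend.limsup_eq] at this
    exact le_antisymm this (zero_le)
  have key1' : ∀ s : ℝ, d < s → lowerMinkowskiContent A s = 0 := by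
    intro s hs
    have h := Filter.liminf_le_limsup (f := L)
      (u := fun e : ℝ => MeasureTheory.volume (euclNbhd A e) / ENNReal.ofReal (e ^ (2 - s)))
    rw [show Filter.limsup _ L = upperMinkowskiContent A s from rfl, key1 s hs] at h
    exact le_antisymm h (zero_le)
  -- contents are ⊤ below d
  have key2 : ∀ s : ℝ, s < d → lowerMinkowskiContent A s = ⊤ := by
    intro s hs
    have hbound : ∀ᶠ e in L,
        ENNReal.ofReal (c * e ^ (s - d))
          ≤ MeasureTheory.volume (euclNbhd A e) / ENNReal.ofReal (e ^ (2 - s)) := by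
      filter_upwards [hlo, self_mem_nhdsWithin] with e h1 h2
      have he : (0:ℝ) < e := h2
      have := ENNReal.div_le_div_right h1 (ENNReal.ofReal (e ^ (2 - s)))
      refine le_trans (le_of_eq ?_) this
      rw [← ENNReal.ofReal_div_of_pos (Real.rpow_pos_of_pos he _), mul_div_assoc,
        ← Real.rpow_sub he]
      ring_nf
    have htR : Filter.Tendsto (fun e : ℝ => c * e ^ (s - d)) L Filter.atTop := by
      have h1 : Filter.Tendsto (fun e : ℝ => (e⁻¹) ^ (d - s)) L Filter.atTop :=
        (tendsto_rpow_atTop (by linarith : (0:ℝ) < d - s)).comp tendsto_inv_nhdsGT_zero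
      have h2 : Filter.Tendsto (fun e : ℝ => e ^ (s - d)) L Filter.atTop := by
        refine h1.congr' ?_
        filter_upwards [self_mem_nhdsWithin] with e he
        have he' : (0:ℝ) < e := he
        rw [Real.inv_rpow he'.le, ← Real.rpow_neg he'.le, neg_sub]
      exact h2.const_mul_atTop hc
    have htend : Filter.Tendsto (fun e : ℝ => ENNReal.ofReal (c * e ^ (s - d))) L (nhds ⊤) :=
      ENNReal.tendsto_ofReal_atTop.comp htR
    have h := Filter.liminf_le_liminf hbound
    rw [htend.liminf_eq] at h
    exact le_antisymm le_top h
  have key2' : ∀ s : ℝ, s < d → upperMinkowskiContent A s = ⊤ := by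
    intro s hs
    have h := Filter.liminf_le_limsup (f := L)
      (u := fun e : ℝ => MeasureTheory.volume (euclNbhd A e) / ENNReal.ofReal (e ^ (2 - s)))
    rw [show Filter.liminf _ L = lowerMinkowskiContent A s from rfl, key2 s hs] at h
    exact le_antisymm le_top h
  constructor
  · unfold lowerBoxDim
    apply le_antisymm
    · have h1 : Set.Ioi d ⊆ {s : ℝ | 0 ≤ s ∧ lowerMinkowskiContent A s = 0} :=
        fun s hs => ⟨le_of_lt (hd.trans hs), key1' s hs⟩
      have h2 : BddBelow {s : ℝ | 0 ≤ s ∧ lowerMinkowskiContent A s = 0} :=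
        ⟨0, fun x hx => hx.1⟩
      calc sInf {s : ℝ | 0 ≤ s ∧ lowerMinkowskiContent A s = 0}
          ≤ sInf (Set.Ioi d) := csInf_le_csInf h2 (by exact ⟨d+1, by simp⟩) h1
        _ = d := csInf_Ioi
    · refine le_csInf ⟨d+1, le_of_lt (by linarith), key1' _ (by linarith)⟩ ?_
      intro s hs
      by_contra hlt
      push_neg at hlt
      have := key2 s hlt
      rw [hs.2] at this
      simp at this
  · unfold upperBoxDim
    apply le_antisymm
    · have h1 : Set.Ioi d ⊆ {s : ℝ | 0 ≤ s ∧ upperMinkowskiContent A s = 0} :=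
        fun s hs => ⟨le_of_lt (hd.trans hs), key1 s hs⟩
      have h2 : BddBelow {s : ℝ | 0 ≤ s ∧ upperMinkowskiContent A s = 0} :=
        ⟨0, fun x hx => hx.1⟩
      calc sInf {s : ℝ | 0 ≤ s ∧ upperMinkowskiContent A s = 0}
          ≤ sInf (Set.Ioi d) := csInf_le_csInf h2 (by exact ⟨d+1, by simp⟩) h1
        _ = d := csInf_Ioi
    · refine le_csInf ⟨d+1, le_of_lt (by linarith), key1 _ (by linarith)⟩ ?_
      intro s hs
      by_contra hlt
      push_neg at hlt
      have := key2' s hlt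
      rw [hs.2] at this
      simp at this

lemma mvt_abs (φ₀ : ℝ) {f : ℝ → ℝ} (hf : DifferentiableOn ℝ f (Set.Ici φ₀))
    {a b B : ℝ} (ha : φ₀ ≤ a)
    (hB : ∀ x ∈ Set.Icc a b, |derivWithin f (Set.Ici φ₀) x| ≤ B)
    {x y : ℝ} (hx : x ∈ Set.Icc a b) (hy : y ∈ Set.Icc a b) :
    |f y - f x| ≤ B * |y - x| := by
  have hsub : Set.Icc a b ⊆ Set.Ici φ₀ := fun w hw => le_trans ha hw.1
  have h1 : ∀ z ∈ Set.Icc a b,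
      HasDerivWithinAt f (derivWithin f (Set.Ici φ₀) z) (Set.Icc a b) z :=
    fun z hz => ((hf z (hsub hz)).hasDerivWithinAt).mono hsub
  exact (convex_Icc a b).norm_image_sub_le_of_norm_hasDerivWithin_le h1 hB hx hy

lemma rpow_anti {x y c : ℝ} (hx : 0 < x) (hxy : x ≤ y) (hc : c ≤ 0) : y ^ c ≤ x ^ c :=
  Real.rpow_le_rpow_of_nonpos hx hxy hc

set_option maxHeartbeats 1000000 in
lemma spiral_vol_lower_s3 (α φ₀ m M : ℝ) (hα0 : 0 < α) (hα1 : α < 1) (hφ₀ : 0 < φ₀)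
    (hm : 0 < m) (hM : 0 < M) (f : ℝ → ℝ)
    (hf_pos : ∀ ψ ≥ φ₀, 0 < f ψ)
    (hf_diff : DifferentiableOn ℝ f (Set.Ici φ₀))
    (hf_lb : ∀ ψ ≥ φ₀, m * ψ ^ (-α) ≤ f ψ)
    (hf'_bound : ∀ ψ ≥ φ₀, |derivWithin f (Set.Ici φ₀) ψ| ≤ M * ψ ^ (-α - 1))
    (hf_lim : Filter.Tendsto f Filter.atTop (nhds 0))
    (Γ' : Set (ℝ × ℝ))
    (hΓ' : Γ' = {P : ℝ × ℝ | ∃ ψ ≥ φ₀, P = (f ψ * Real.cos ψ, f ψ * Real.sin ψ)}) :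
    ∃ c > 0, ∀ᶠ e in nhdsWithin (0:ℝ) (Set.Ioi 0),
      ENNReal.ofReal (c * e ^ (2 - 2/(1+α))) ≤ MeasureTheory.volume (euclNbhd Γ' e) := by
  have hπ := Real.pi_pos
  have h1α : (0:ℝ) < 1 + α := by linarith
  set C₇ : ℝ := (4*π*M) ^ (1/(1+α)) + φ₀ + 4*π with hC₇
  have hC₇pos : 0 < C₇ := by
    have : (0:ℝ) < (4*π*M) ^ (1/(1+α)) := Real.rpow_pos_of_pos (by positivity) _
    positivity
  set c₁ : ℝ := m * C₇ ^ (-α) with hc₁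
  have hc₁pos : 0 < c₁ := by
    have : (0:ℝ) < C₇ ^ (-α) := Real.rpow_pos_of_pos hC₇pos _
    positivity
  refine ⟨c₁ * c₁, by positivity, ?_⟩
  filter_upwards [Ioo_mem_nhdsGT_of_mem (by constructor <;> norm_num : (0:ℝ) ∈ Set.Ico 0 1)]
    with e he
  obtain ⟨he0, he1⟩ := he
  -- key quantities
  set Ψ' : ℝ := (4*π*M/e) ^ (1/(1+α)) with hΨ'
  have hΨ'pos : 0 < Ψ' := Real.rpow_pos_of_pos (by positivity) _
  set B : ℝ := Ψ' + φ₀ + 4*π with hB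
  have hBpos : 0 < B := by positivity
  set ρ : ℝ := m * B ^ (-α) with hρ
  have hρpos : 0 < ρ := by
    have : (0:ℝ) < B ^ (-α) := Real.rpow_pos_of_pos hBpos _
    positivity
  -- the square is inside the neighborhood
  have hsq : Set.Ioo (-(ρ/2)) (ρ/2) ×ˢ Set.Ioo (-(ρ/2)) (ρ/2) ⊆ euclNbhd Γ' e := by
    rintro ⟨x, y⟩ ⟨hx, hy⟩
    simp only [Set.mem_Ioo] at hx hy
    by_cases h0 : x = 0 ∧ y = 0
    · -- the origin: use a far point on the spiral
      obtain ⟨ψ, hψ1, hψ2⟩ :=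
        ((hf_lim.eventually (gt_mem_nhds he0)).and (eventually_ge_atTop φ₀)).exists
      refine ⟨(f ψ * Real.cos ψ, f ψ * Real.sin ψ), by rw [hΓ']; exact ⟨ψ, hψ2, rfl⟩, ?_⟩
      obtain ⟨hx0, hy0⟩ := h0
      have hfψ := hf_pos ψ hψ2
      have hkey : (x - f ψ * Real.cos ψ) ^ 2 + (y - f ψ * Real.sin ψ) ^ 2 = f ψ ^ 2 := by
        rw [hx0, hy0]
        have := Real.sin_sq_add_cos_sq ψ
        ring_nf
        nlinarith [Real.sin_sq_add_cos_sq ψ]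
      rw [hkey, Real.sqrt_sq hfψ.le]
      exact hψ1
    · -- a nonzero point of the square
      set ρP : ℝ := Real.sqrt (x^2 + y^2) with hρP
      have hρP2 : ρP^2 = x^2 + y^2 := Real.sq_sqrt (by positivity)
      have hρPpos : 0 < ρP := by
        rcases not_and_or.mp h0 with h | h
        · exact Real.sqrt_pos.mpr (by positivity)
        · exact Real.sqrt_pos.mpr (by positivity)
      have hρPlt : ρP < ρ := by
        nlinarith [abs_lt.mpr ⟨hx.1, hx.2⟩, abs_lt.mpr ⟨hy.1, hy.2⟩, sq_abs x, sq_abs y,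
          hρP2, hρPpos]
      -- polar angle
      set z : ℂ := ⟨x, y⟩ with hz
      have hznz : z ≠ 0 := by
        intro hzz
        apply h0
        constructor
        · exact congrArg Complex.re hzz
        · exact congrArg Complex.im hzz
      have habs : ‖z‖ = ρP := by
        rw [Complex.norm_def, Complex.normSq_apply]
        simp only [hz]
        rw [hρP]
        ring_nf
      set β : ℝ := Complex.arg z with hβ
      have hcosβ : ρP * Real.cos β = x := by
        rw [hβ, Complex.cos_arg hznz, habs]
        field_simp
        rfl
      have hsinβ : ρP * Real.sin β = y := by
        rw [hβ, Complex.sin_arg, habs]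
        field_simp
        rfl
      -- winding angles
      set n : ℤ := ⌈(φ₀ - β)/(2*π)⌉ with hn
      set ψk : ℕ → ℝ := fun k => β + (n + k) * (2*π) with hψk
      have hψk0 : φ₀ ≤ ψk 0 := by
        have h1 : (φ₀ - β)/(2*π) ≤ n := Int.le_ceil _
        have h2 : φ₀ - β ≤ n * (2*π) := by
          rw [div_le_iff₀ (by positivity)] at h1
          linarith
        simp only [hψk]
        push_cast
        linarith
      have hψk0' : ψk 0 ≤ φ₀ + 2*π := by
        have h1 : (n:ℝ) < (φ₀ - β)/(2*π) + 1 := Int.ceil_lt_add_one _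
        have h2 : (n:ℝ) * (2*π) < φ₀ - β + 2*π := by
          have h3 := mul_lt_mul_of_pos_right h1 (by positivity : (0:ℝ) < 2*π)
          rw [add_mul, one_mul, div_mul_cancel₀ _ (by positivity : (2*π:ℝ) ≠ 0)] at h3
          linarith
        simp only [hψk]
        push_cast
        linarith
      have hψkmono : ∀ j k : ℕ, j ≤ k → ψk j ≤ ψk k := by
        intro j k hjk
        simp only [hψk]
        have hc : (j:ℝ) ≤ k := by exact_mod_cast hjk
        have := mul_le_mul_of_nonneg_right
          (by linarith : ((n:ℝ)+j) ≤ (n:ℝ)+k) (by positivity : (0:ℝ) ≤ 2*π)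
        linarith
      have hψkφ₀ : ∀ k : ℕ, φ₀ ≤ ψk k := fun k => le_trans (hψk0) (hψkmono 0 k (Nat.zero_le k))
      have hψksucc : ∀ k : ℕ, ψk (k+1) = ψk k + 2*π := by
        intro k
        simp only [hψk]
        push_cast
        ring
      have hcosk : ∀ k : ℕ, Real.cos (ψk k) = Real.cos β := by
        intro k
        simp only [hψk]
        have := Real.cos_add_int_mul_two_pi β (n + k)
        push_cast at this ⊢
        exact this
      have hsink : ∀ k : ℕ, Real.sin (ψk k) = Real.sin β := by
        intro k
        simp only [hψk]
        have := Real.sin_add_int_mul_two_pi β (n + k)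
        push_cast at this ⊢
        exact this
      -- windings with angle up to B have radius ≥ ρ > ρP
      have hclaim1 : ∀ k : ℕ, ψk k ≤ B → ρP ≤ f (ψk k) := by
        intro k hk
        have h1 : m * B ^ (-α) ≤ m * (ψk k) ^ (-α) := by
          have := rpow_anti (lt_of_lt_of_le hφ₀ (hψkφ₀ k)) hk (by linarith : -α ≤ 0)
          nlinarith
        have h2 := hf_lb (ψk k) (hψkφ₀ k)
        calc ρP ≤ ρ := hρPlt.le
          _ = m * B ^ (-α) := rfl
          _ ≤ m * (ψk k) ^ (-α) := h1
          _ ≤ f (ψk k) := h2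
      -- the set of windings with radius ≥ ρP
      set S : Set ℕ := {k : ℕ | ρP ≤ f (ψk k)} with hS
      have hψktop : Filter.Tendsto ψk Filter.atTop Filter.atTop := by
        simp only [hψk]
        apply Filter.tendsto_atTop_add_const_left
        have h1 : Filter.Tendsto (fun k : ℕ => ((n:ℝ) + k)) Filter.atTop Filter.atTop :=
          Filter.tendsto_atTop_add_const_left _ _ tendsto_natCast_atTop_atTop
        exact h1.atTop_mul_const (by positivity)
      have hSbdd : BddAbove S := by
        obtain ⟨K, hK⟩ :=
          ((hf_lim.comp hψktop).eventually (gt_mem_nhds hρPpos)).exists_forall_of_atTop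
        refine ⟨K, fun k hk => ?_⟩
        by_contra hlt
        push_neg at hlt
        have := hK k (le_of_lt hlt)
        simp only [Function.comp] at this
        exact absurd hk (by simp only [hS, Set.mem_setOf_eq]; linarith)
      -- k̂ : a winding in S beyond Ψ'
      set khat : ℕ := ⌊(B - ψk 0)/(2*π)⌋₊ with hkhat
      have hψ0B : ψk 0 ≤ B := by
        have : φ₀ + 2*π ≤ B := by
          simp only [hB]
          linarith [hΨ'pos]
        linarith [hψk0']
      have hkhat1 : ψk khat ≤ B := by
        have h1 : (khat : ℝ) ≤ (B - ψk 0)/(2*π) :=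
          Nat.floor_le (div_nonneg (by linarith) (by positivity))
        have h2 : (khat:ℝ) * (2*π) ≤ B - ψk 0 := by
          rw [← le_div_iff₀ (by positivity)]
          exact h1
        have : ψk khat = ψk 0 + khat * (2*π) := by
          simp only [hψk]; push_cast; ring
        linarith [this]
      have hkhat2 : B < ψk (khat + 1) := by
        have h1 : (B - ψk 0)/(2*π) < khat + 1 := Nat.lt_floor_add_one _
        have h2 : B - ψk 0 < (khat + 1) * (2*π) := by
          rw [div_lt_iff₀ (by positivity)] at h1
          linarith
        have : ψk (khat+1) = ψk 0 + (khat+1) * (2*π) := by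
          simp only [hψk]; push_cast; ring
        linarith [this]
      have hkhatS : khat ∈ S := hclaim1 khat hkhat1
      -- the largest winding in S
      set ks : ℕ := sSup S with hks
      have hksS : ks ∈ S := Nat.sSup_mem ⟨khat, hkhatS⟩ hSbdd
      have hksge : khat ≤ ks := le_csSup hSbdd hkhatS
      have hksnot : f (ψk (ks+1)) < ρP := by
        by_contra hge
        push_neg at hge
        have : ks + 1 ∈ S := hge
        have := le_csSup hSbdd this
        omega
      have hksΨ' : Ψ' ≤ ψk ks := by
        have h1 : ψk khat + 2*π = ψk (khat+1) := (hψksucc khat).symm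
        have h2 : B - 2*π < ψk khat := by linarith [hkhat2, hψksucc khat]
        have h3 : Ψ' ≤ B - 2*π := by simp only [hB]; linarith
        calc Ψ' ≤ B - 2*π := h3
          _ ≤ ψk khat := h2.le
          _ ≤ ψk ks := hψkmono khat ks hksge
      -- gap estimate via MVT
      have hgap : f (ψk ks) - f (ψk (ks+1)) ≤ e / 2 := by
        have hbound : ∀ w ∈ Set.Icc (ψk ks) (ψk (ks+1)),
            |derivWithin f (Set.Ici φ₀) w| ≤ M * Ψ' ^ (-α-1) := by
          intro w hw
          have hwφ₀ : φ₀ ≤ w := le_trans (hψkφ₀ ks) hw.1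
          refine le_trans (hf'_bound w hwφ₀) ?_
          have hΨ'w : Ψ' ≤ w := le_trans hksΨ' hw.1
          have := rpow_anti hΨ'pos hΨ'w (by linarith : -α-1 ≤ 0)
          nlinarith
        have := mvt_abs φ₀ hf_diff (hψkφ₀ ks) hbound
          (Set.left_mem_Icc.mpr (by rw [hψksucc]; linarith))
          (Set.right_mem_Icc.mpr (by rw [hψksucc]; linarith))
        have h2 : |ψk (ks+1) - ψk ks| = 2*π := by
          rw [hψksucc, add_sub_cancel_left]
          exact abs_of_nonneg (by positivity)
        rw [h2] at this
        have h3 : M * Ψ' ^ (-α-1) * (2*π) ≤ e/2 := by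
          have hΨ'e : Ψ' ^ (-α-1) = e / (4*π*M) := by
            rw [hΨ']
            rw [← Real.rpow_mul (by positivity)]
            have hexp : (1/(1+α)) * (-α-1) = -1 := by field_simp; ring
            rw [hexp, Real.rpow_neg_one]
            rw [inv_div]
          rw [hΨ'e]
          have heq : M * (e / (4*π*M)) * (2*π) = e/2 := by
            field_simp
            ring
          linarith
        calc f (ψk ks) - f (ψk (ks+1)) ≤ |f (ψk (ks+1)) - f (ψk ks)| := by
              rw [abs_sub_comm]; exact le_abs_self _
          _ ≤ M * Ψ' ^ (-α-1) * (2*π) := this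
          _ ≤ e/2 := h3
      -- conclude membership
      refine ⟨(f (ψk ks) * Real.cos (ψk ks), f (ψk ks) * Real.sin (ψk ks)),
        by rw [hΓ']; exact ⟨ψk ks, hψkφ₀ ks, rfl⟩, ?_⟩
      have hkey : (x - f (ψk ks) * Real.cos (ψk ks)) ^ 2
          + (y - f (ψk ks) * Real.sin (ψk ks)) ^ 2 = (ρP - f (ψk ks))^2 := by
        rw [hcosk, hsink, ← hcosβ, ← hsinβ]
        have := Real.sin_sq_add_cos_sq β
        nlinarith [Real.sin_sq_add_cos_sq β]
      rw [hkey, Real.sqrt_sq_eq_abs]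
      have h1 : ρP ≤ f (ψk ks) := hksS
      have h2 : f (ψk ks) - ρP ≤ e/2 := by
        have : f (ψk (ks+1)) < ρP := hksnot
        linarith [hgap]
      rw [abs_sub_comm, abs_of_nonneg (by linarith)]
      linarith
  -- volume estimate
  have hvol : ENNReal.ofReal (ρ * ρ) ≤ MeasureTheory.volume (euclNbhd Γ' e) := by
    have h1 := MeasureTheory.measure_mono
      (μ := (MeasureTheory.volume : MeasureTheory.Measure (ℝ × ℝ))) hsq
    have h2 : MeasureTheory.volume (Set.Ioo (-(ρ/2)) (ρ/2) ×ˢ Set.Ioo (-(ρ/2)) (ρ/2))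
        = ENNReal.ofReal (ρ * ρ) := by
      rw [MeasureTheory.Measure.volume_eq_prod, MeasureTheory.Measure.prod_prod,
        Real.volume_Ioo]
      rw [← ENNReal.ofReal_mul (by linarith)]
      congr 1
      ring
    rw [← h2]
    exact h1
  refine le_trans ?_ hvol
  apply ENNReal.ofReal_le_ofReal
  -- ρ ≥ c₁ e^(α/(1+α))
  have hΨ'eq : Ψ' = (4*π*M) ^ (1/(1+α)) * e ^ (-(1/(1+α))) := by
    rw [hΨ', Real.div_rpow (by positivity) he0.le, Real.rpow_neg he0.le, div_eq_mul_inv]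
  have hone : (1:ℝ) ≤ e ^ (-(1/(1+α))) :=
    Real.one_le_rpow_of_pos_of_le_one_of_nonpos he0 he1.le
      (by rw [neg_nonpos]; positivity)
  have hBle : B ≤ C₇ * e ^ (-(1/(1+α))) := by
    rw [hB, hC₇, add_mul, add_mul]
    have h1 : φ₀ ≤ φ₀ * e ^ (-(1/(1+α))) := le_mul_of_one_le_right hφ₀.le hone
    have h2 : 4*π ≤ 4*π * e ^ (-(1/(1+α))) := le_mul_of_one_le_right (by positivity) hone
    rw [hΨ'eq]
    linarith
  have hρge : c₁ * e ^ (α/(1+α)) ≤ ρ := by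
    have h1 := rpow_anti hBpos hBle (by linarith : -α ≤ 0)
    have h2 : (C₇ * e ^ (-(1/(1+α)))) ^ (-α) = C₇ ^ (-α) * e ^ (α/(1+α)) := by
      rw [Real.mul_rpow hC₇pos.le (by positivity)]
      congr 1
      rw [← Real.rpow_mul he0.le]
      congr 1
      field_simp
    rw [h2] at h1
    calc c₁ * e ^ (α/(1+α)) = m * (C₇ ^ (-α) * e ^ (α/(1+α))) := by rw [hc₁]; ring
      _ ≤ m * B ^ (-α) := by nlinarith
      _ = ρ := rfl
  have he2 : e ^ (2 - 2/(1+α)) = e ^ (α/(1+α)) * e ^ (α/(1+α)) := by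
    rw [← Real.rpow_add he0]
    congr 1
    field_simp
    ring
  rw [he2]
  have h3 : (c₁ * e ^ (α/(1+α))) * (c₁ * e ^ (α/(1+α))) ≤ ρ * ρ :=
    mul_le_mul hρge hρge (by positivity) hρpos.le
  calc c₁ * c₁ * (e ^ (α/(1+α)) * e ^ (α/(1+α)))
      = (c₁ * e ^ (α/(1+α))) * (c₁ * e ^ (α/(1+α))) := by ring
    _ ≤ ρ * ρ := h3

lemma rpow_anti' {x y c : ℝ} (hx : 0 < x) (hxy : x ≤ y) (hc : c ≤ 0) : y ^ c ≤ x ^ c :=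
  Real.rpow_le_rpow_of_nonpos hx hxy hc

lemma coord_abs_le {x y : ℝ} : |x| ≤ Real.sqrt (x ^ 2 + y ^ 2) := by
  rw [← Real.sqrt_sq_eq_abs]
  exact Real.sqrt_le_sqrt (by nlinarith [sq_nonneg y])

set_option maxHeartbeats 1000000 in
lemma spiral_vol_upper_s3 (α φ₀ m' M : ℝ) (hα0 : 0 < α) (hα1 : α < 1) (hφ₀ : 0 < φ₀)
    (hm' : 0 < m') (hM : 0 < M) (f : ℝ → ℝ)
    (hf_diff : DifferentiableOn ℝ f (Set.Ici φ₀))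
    (hf_ub : ∀ ψ ≥ φ₀, |f ψ| ≤ m' * ψ ^ (-α))
    (hf'_bound : ∀ ψ ≥ φ₀, |derivWithin f (Set.Ici φ₀) ψ| ≤ M * ψ ^ (-α - 1))
    (Γ' : Set (ℝ × ℝ))
    (hΓ' : Γ' = {P : ℝ × ℝ | ∃ ψ ≥ φ₀, P = (f ψ * Real.cos ψ, f ψ * Real.sin ψ)}) :
    ∃ C > 0, ∀ᶠ e in nhdsWithin (0:ℝ) (Set.Ioi 0),
      MeasureTheory.volume (euclNbhd Γ' e) ≤ ENNReal.ofReal (C * e ^ (2 - 2/(1+α))) := by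
  have hπ := Real.pi_pos
  have h1α : (0:ℝ) < 1 + α := by linarith
  set q : ℝ := 1 - α with hq
  have hq0 : 0 < q := by simp only [hq]; linarith
  set p : ℝ := 1/q with hp
  have hp1 : 1 ≤ p := by
    rw [hp, le_div_iff₀ hq0]
    simp only [hq]; linarith
  have hp0 : 0 < p := by linarith
  set u₀ : ℝ := φ₀ ^ q with hu₀
  have hu₀pos : 0 < u₀ := Real.rpow_pos_of_pos hφ₀ _
  have hu₀p : u₀ ^ p = φ₀ := by
    rw [hu₀, ← Real.rpow_mul hφ₀.le]
    rw [show q * p = 1 from by rw [hp, mul_one_div, div_self hq0.ne']]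
    exact Real.rpow_one φ₀
  set D : ℝ → ℝ := derivWithin f (Set.Ici φ₀) with hD
  set C₀ : ℝ := m' + M * φ₀⁻¹ with hC₀
  have hC₀pos : 0 < C₀ := by positivity
  set K₁ : ℝ := C₀ * p * 2 ^ (p*α) with hK₁
  have hK₁pos : 0 < K₁ := by
    have : (0:ℝ) < 2 ^ (p*α) := Real.rpow_pos_of_pos (by norm_num) _
    positivity
  set C : ℝ := 4*(m'+1)^2 + 8*(K₁+1)^2 with hCdef
  refine ⟨C, by positivity, ?_⟩
  have he₀pos : 0 < min 1 u₀ := lt_min one_pos hu₀pos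
  filter_upwards [Ioo_mem_nhdsGT_of_mem
    (Set.left_mem_Ico.mpr he₀pos : (0:ℝ) ∈ Set.Ico 0 (min 1 u₀))] with e he
  obtain ⟨he0, heB⟩ := he
  have he1 : e < 1 := lt_of_lt_of_le heB (min_le_left _ _)
  have heu₀ : e ≤ u₀ := le_of_lt (lt_of_lt_of_le heB (min_le_right _ _))
  -- key quantities
  set κ : ℝ := α/(1+α) with hκ
  set Ψ : ℝ := e ^ (-(1/(1+α))) with hΨ
  have hΨpos : 0 < Ψ := Real.rpow_pos_of_pos he0 _
  set ψs : ℕ → ℝ := fun i => (u₀ + i*e) ^ p with hψs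
  have hupos : ∀ i : ℕ, 0 < u₀ + i*e := by
    intro i
    have : (0:ℝ) ≤ i*e := by positivity
    linarith
  have hψpos : ∀ i : ℕ, 0 < ψs i := fun i => Real.rpow_pos_of_pos (hupos i) _
  have hψφ₀ : ∀ i : ℕ, φ₀ ≤ ψs i := by
    intro i
    rw [← hu₀p]
    exact Real.rpow_le_rpow hu₀pos.le (by nlinarith [hupos i, (by positivity : (0:ℝ) ≤ i*e)]) hp0.le
  have hψmono : ∀ i : ℕ, ψs i ≤ ψs (i+1) := by
    intro i
    apply Real.rpow_le_rpow (hupos i).le _ hp0.le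
    push_cast
    nlinarith
  -- speed bound for the curve coordinates
  set γ₁ : ℝ → ℝ := fun ψ => f ψ * Real.cos ψ with hγ₁
  set γ₂ : ℝ → ℝ := fun ψ => f ψ * Real.sin ψ with hγ₂
  set γ₁' : ℝ → ℝ := fun ψ => D ψ * Real.cos ψ + f ψ * (-Real.sin ψ) with hγ₁'
  set γ₂' : ℝ → ℝ := fun ψ => D ψ * Real.sin ψ + f ψ * Real.cos ψ with hγ₂'
  have hspeed : ∀ x, φ₀ ≤ x → |γ₁' x| ≤ C₀ * x ^ (-α) ∧ |γ₂' x| ≤ C₀ * x ^ (-α) := by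
    intro x hx
    have hx0 : 0 < x := lt_of_lt_of_le hφ₀ hx
    have hfx := hf_ub x hx
    have hDx := hf'_bound x hx
    have hsplit : M * x ^ (-α-1) + m' * x ^ (-α) ≤ C₀ * x ^ (-α) := by
      have h1 : x ^ (-α-1) = x ^ (-α) * x⁻¹ := by
        rw [← Real.rpow_neg_one x, ← Real.rpow_add hx0]
        ring_nf
      have h2 : x⁻¹ ≤ φ₀⁻¹ := by
        apply inv_anti₀ hφ₀ hx
      have h3 : (0:ℝ) < x ^ (-α) := Real.rpow_pos_of_pos hx0 _
      rw [h1, hC₀]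
      have h4 : M * x ^ (-α) * x⁻¹ ≤ M * x ^ (-α) * φ₀⁻¹ :=
        mul_le_mul_of_nonneg_left h2 (by positivity)
      nlinarith
    constructor
    · refine le_trans (abs_add_le _ _) (le_trans ?_ hsplit)
      have e1 : |D x * Real.cos x| ≤ |D x| := by
        rw [abs_mul]
        exact mul_le_of_le_one_right (abs_nonneg _) (Real.abs_cos_le_one x)
      have e2 : |f x * (-Real.sin x)| ≤ |f x| := by
        rw [abs_mul, abs_neg]
        exact mul_le_of_le_one_right (abs_nonneg _) (Real.abs_sin_le_one x)
      have : (0:ℝ) < x ^ (-α-1) := Real.rpow_pos_of_pos hx0 _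
      nlinarith [hDx, hfx]
    · refine le_trans (abs_add_le _ _) (le_trans ?_ hsplit)
      have e1 : |D x * Real.sin x| ≤ |D x| := by
        rw [abs_mul]
        exact mul_le_of_le_one_right (abs_nonneg _) (Real.abs_sin_le_one x)
      have e2 : |f x * Real.cos x| ≤ |f x| := by
        rw [abs_mul]
        exact mul_le_of_le_one_right (abs_nonneg _) (Real.abs_cos_le_one x)
      have : (0:ℝ) < x ^ (-α-1) := Real.rpow_pos_of_pos hx0 _
      nlinarith [hDx, hfx]
  -- step bound
  have hstep : ∀ i : ℕ, ψs (i+1) - ψs i ≤ e * p * (ψs (i+1)) ^ α := by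
    intro i
    set a := u₀ + i*e with ha
    set b := u₀ + (i+1)*e with hb
    have hab : a ≤ b := by simp only [ha, hb]; push_cast; nlinarith
    have hapos : 0 < a := hupos i
    have hmvt : ∀ x ∈ Set.Icc a b, ∀ y ∈ Set.Icc a b,
        |(fun u => u ^ p) y - (fun u => u ^ p) x| ≤ (p * b ^ (p-1)) * |y - x| := by
      intro x hx y hy
      have h := (convex_Icc a b).norm_image_sub_le_of_norm_hasDerivWithin_le
        (f := fun u => u ^ p) (f' := fun u => p * u ^ (p-1)) (C := p * b ^ (p-1))
        (fun z hz => (Real.hasDerivAt_rpow_const (Or.inr hp1)).hasDerivWithinAt)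
        (fun z hz => by
          rw [Real.norm_eq_abs]
          have hz0 : 0 < z := lt_of_lt_of_le hapos hz.1
          have h6 : z ^ (p-1) ≤ b ^ (p-1) := Real.rpow_le_rpow hz0.le hz.2 (by linarith)
          rw [abs_of_nonneg (by positivity)]
          exact mul_le_mul_of_nonneg_left h6 hp0.le)
        hx hy
      simpa [Real.norm_eq_abs] using h
    have h1 := hmvt a (Set.left_mem_Icc.mpr hab) b (Set.right_mem_Icc.mpr hab)
    simp only at h1
    have h2 : |b - a| = e := by
      rw [abs_of_nonneg (by linarith)]
      simp only [hb, ha]; push_cast; ring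
    rw [h2] at h1
    have h3 : b ^ (p-1) = (ψs (i+1)) ^ α := by
      have : ψs (i+1) = b ^ p := by simp only [hψs, hb]; push_cast; ring_nf
      rw [this, ← Real.rpow_mul (by positivity : (0:ℝ) ≤ b)]
      congr 1
      rw [hp]
      field_simp
      simp only [hq]
      ring
    have h4 : ψs (i+1) - ψs i ≤ |b ^ p - a ^ p| := by
      have : ψs (i+1) = b ^ p := by simp only [hψs, hb]; push_cast; ring_nf
      have h5 : ψs i = a ^ p := by simp only [hψs, ha]
      rw [this, h5]
      exact le_abs_self _
    calc ψs (i+1) - ψs i ≤ |b ^ p - a ^ p| := h4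
      _ ≤ (p * b ^ (p-1)) * e := h1
      _ = e * p * (ψs (i+1)) ^ α := by rw [h3]; ring
  -- ratio bound
  have hratio : ∀ i : ℕ, (ψs (i+1)) ^ α ≤ 2 ^ (p*α) * (ψs i) ^ α := by
    intro i
    have h1 : u₀ + ((i:ℝ)+1)*e ≤ 2*(u₀ + i*e) := by
      have : (0:ℝ) ≤ (i:ℝ)*e := by positivity
      have h2 : (0:ℝ) ≤ (i:ℝ)*e + (i:ℝ)*u₀ := by positivity
      nlinarith [heu₀]
    have h2 : ψs (i+1) ≤ 2 ^ p * ψs i := by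
      have h3 : ψs (i+1) = (u₀ + ((i:ℝ)+1)*e) ^ p := by simp only [hψs]; push_cast; ring_nf
      have h4 : (u₀ + ((i:ℝ)+1)*e) ^ p ≤ (2*(u₀ + i*e)) ^ p :=
        Real.rpow_le_rpow (by positivity) h1 hp0.le
      have h5 : (2*(u₀ + (i:ℝ)*e)) ^ p = 2 ^ p * (ψs i) := by
        rw [Real.mul_rpow (by norm_num) (hupos i).le]
      rw [h3]
      rw [h5] at h4
      exact h4
    calc (ψs (i+1)) ^ α ≤ (2 ^ p * ψs i) ^ α :=
          Real.rpow_le_rpow (hψpos _).le h2 hα0.le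
      _ = 2 ^ (p*α) * (ψs i) ^ α := by
          rw [Real.mul_rpow (by positivity) (hψpos i).le, ← Real.rpow_mul (by norm_num)]
  -- displacement within a piece
  have hdisp : ∀ i : ℕ, ∀ ψ, ψs i ≤ ψ → ψ ≤ ψs (i+1) →
      |γ₁ ψ - γ₁ (ψs i)| ≤ K₁ * e ∧ |γ₂ ψ - γ₂ (ψs i)| ≤ K₁ * e := by
    intro i ψ h1 h2
    have hIcc : Set.Icc (ψs i) (ψs (i+1)) ⊆ Set.Ici φ₀ := fun w hw => le_trans (hψφ₀ i) hw.1
    have hBnd : ∀ z ∈ Set.Icc (ψs i) (ψs (i+1)), |γ₁' z| ≤ C₀ * (ψs i) ^ (-α) ∧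
        |γ₂' z| ≤ C₀ * (ψs i) ^ (-α) := by
      intro z hz
      have hz0 := hspeed z (hIcc hz)
      have : z ^ (-α) ≤ (ψs i) ^ (-α) := rpow_anti' (hψpos i) hz.1 (by linarith)
      exact ⟨le_trans hz0.1 (by nlinarith), le_trans hz0.2 (by nlinarith)⟩
    have hψmem : ψ ∈ Set.Icc (ψs i) (ψs (i+1)) := ⟨h1, h2⟩
    have hψimem : ψs i ∈ Set.Icc (ψs i) (ψs (i+1)) :=
      Set.left_mem_Icc.mpr (hψmono i)
    have habs : |ψ - ψs i| ≤ ψs (i+1) - ψs i := by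
      rw [abs_of_nonneg (by linarith)]; linarith
    have hprod : C₀ * (ψs i) ^ (-α) * (ψs (i+1) - ψs i) ≤ K₁ * e := by
      have hs := hstep i
      have hr := hratio i
      have hipos : (0:ℝ) < (ψs i) ^ (-α) := Real.rpow_pos_of_pos (hψpos i) _
      have hii : (ψs i) ^ (-α) * (ψs i) ^ α = 1 := by
        rw [← Real.rpow_add (hψpos i)]
        simp
      have h2p : (0:ℝ) < 2 ^ (p*α) := Real.rpow_pos_of_pos (by norm_num) _
      have hsucc_pos : (0:ℝ) ≤ (ψs (i+1)) ^ α := (Real.rpow_pos_of_pos (hψpos _) _).le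
      calc C₀ * (ψs i) ^ (-α) * (ψs (i+1) - ψs i)
          ≤ C₀ * (ψs i) ^ (-α) * (e * p * (ψs (i+1)) ^ α) :=
            mul_le_mul_of_nonneg_left hs (by positivity)
        _ ≤ C₀ * (ψs i) ^ (-α) * (e * p * (2 ^ (p*α) * (ψs i) ^ α)) :=
            mul_le_mul_of_nonneg_left
              (mul_le_mul_of_nonneg_left hr (by positivity)) (by positivity)
        _ = K₁ * e * ((ψs i) ^ (-α) * (ψs i) ^ α) := by rw [hK₁]; ring
        _ = K₁ * e := by rw [hii, mul_one]
    constructor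
    · have hmvt : ∀ z ∈ Set.Icc (ψs i) (ψs (i+1)),
          HasDerivWithinAt γ₁ (γ₁' z) (Set.Icc (ψs i) (ψs (i+1))) z := by
        intro z hz
        exact (((hf_diff z (hIcc hz)).hasDerivWithinAt).mono hIcc).mul
          ((Real.hasDerivAt_cos z).hasDerivWithinAt)
      have hh := (convex_Icc _ _).norm_image_sub_le_of_norm_hasDerivWithin_le hmvt
        (fun z hz => (hBnd z hz).1) hψimem hψmem
      rw [Real.norm_eq_abs, Real.norm_eq_abs] at hh
      refine le_trans hh (le_trans ?_ hprod)
      exact mul_le_mul_of_nonneg_left habs (by positivity)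
    · have hmvt : ∀ z ∈ Set.Icc (ψs i) (ψs (i+1)),
          HasDerivWithinAt γ₂ (γ₂' z) (Set.Icc (ψs i) (ψs (i+1))) z := by
        intro z hz
        exact (((hf_diff z (hIcc hz)).hasDerivWithinAt).mono hIcc).mul
          ((Real.hasDerivAt_sin z).hasDerivWithinAt)
      have hh := (convex_Icc _ _).norm_image_sub_le_of_norm_hasDerivWithin_le hmvt
        (fun z hz => (hBnd z hz).2) hψimem hψmem
      rw [Real.norm_eq_abs, Real.norm_eq_abs] at hh
      refine le_trans hh (le_trans ?_ hprod)
      exact mul_le_mul_of_nonneg_left habs (by positivity)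
  -- the covering
  set N : ℕ := ⌈(Ψ ^ q - u₀)/e⌉₊ with hN
  set R : ℝ := (K₁ + 1) * e with hR
  set Rin : ℝ := m' * Ψ ^ (-α) + e with hRin
  set Sqi : ℕ → Set (ℝ × ℝ) := fun i =>
    Set.Icc (γ₁ (ψs i) - R) (γ₁ (ψs i) + R) ×ˢ Set.Icc (γ₂ (ψs i) - R) (γ₂ (ψs i) + R)
    with hSqi
  set Sqin : Set (ℝ × ℝ) := Set.Icc (-Rin) Rin ×ˢ Set.Icc (-Rin) Rin with hSqin
  have hcover : euclNbhd Γ' e ⊆ Sqin ∪ ⋃ i ∈ Finset.range N, Sqi i := by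
    rintro ⟨x, y⟩ ⟨a, haΓ, hdist⟩
    rw [hΓ'] at haΓ
    obtain ⟨ψ, hψφ, hamem⟩ := haΓ
    subst hamem
    have hd1 : |x - γ₁ ψ| < e := lt_of_le_of_lt coord_abs_le hdist
    have hd2 : |y - γ₂ ψ| < e := by
      refine lt_of_le_of_lt ?_ hdist
      rw [← Real.sqrt_sq_eq_abs]
      exact Real.sqrt_le_sqrt (by nlinarith [sq_nonneg (x - γ₁ ψ)])
    by_cases hcase : Ψ ≤ ψ
    · -- inner part
      left
      have hfa : |f ψ| ≤ m' * Ψ ^ (-α) := by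
        refine le_trans (hf_ub ψ hψφ) ?_
        have : ψ ^ (-α) ≤ Ψ ^ (-α) := rpow_anti' hΨpos hcase (by linarith)
        nlinarith
      have h1 : |γ₁ ψ| ≤ m' * Ψ ^ (-α) := by
        refine le_trans ?_ hfa
        simp only [hγ₁, abs_mul]
        exact mul_le_of_le_one_right (abs_nonneg _) (Real.abs_cos_le_one ψ)
      have h2 : |γ₂ ψ| ≤ m' * Ψ ^ (-α) := by
        refine le_trans ?_ hfa
        simp only [hγ₂, abs_mul]
        exact mul_le_of_le_one_right (abs_nonneg _) (Real.abs_sin_le_one ψ)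
      constructor
      · simp only [Set.mem_Icc]
        constructor <;> [skip; skip] <;>
          · have := abs_le.mp h1
            have := abs_le.mp (le_of_lt hd1)
            simp only [hRin]
            cases' abs_le.mp h1 with l1 l2
            cases' abs_le.mp (le_of_lt hd1) with l3 l4
            linarith
      · simp only [Set.mem_Icc]
        constructor <;>
          · cases' abs_le.mp h2 with l1 l2
            cases' abs_le.mp (le_of_lt hd2) with l3 l4
            simp only [hRin]
            linarith
    · -- outer part: find the piece
      right
      push_neg at hcase
      set u : ℝ := ψ ^ q with hu
      have hψ0 : 0 < ψ := lt_of_lt_of_le hφ₀ hψφ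
      have huu₀ : u₀ ≤ u := Real.rpow_le_rpow hφ₀.le hψφ hq0.le
      set i : ℕ := ⌊(u - u₀)/e⌋₊ with hi
      have hfl : (i:ℝ) ≤ (u - u₀)/e :=
        Nat.floor_le (div_nonneg (by linarith) he0.le)
      have hfl2 : (u - u₀)/e < i + 1 := Nat.lt_floor_add_one _
      have hui : u₀ + i*e ≤ u := by
        have h4 := (le_div_iff₀ he0).mp hfl
        linarith
      have hui2 : u < u₀ + (i+1)*e := by
        have h4 := (div_lt_iff₀ he0).mp hfl2
        linarith
      have hψu : ψ = u ^ p := by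
        rw [hu, ← Real.rpow_mul hψ0.le]
        rw [show q * p = 1 from by rw [hp, mul_one_div, div_self hq0.ne']]
        exact (Real.rpow_one ψ).symm
      have hmem1 : ψs i ≤ ψ := by
        rw [hψu, hψs]
        exact Real.rpow_le_rpow (hupos i).le hui hp0.le
      have hmem2 : ψ ≤ ψs (i+1) := by
        have h4 : u ≤ u₀ + ((i:ℝ)+1)*e := hui2.le
        have h5 := Real.rpow_le_rpow (by positivity : (0:ℝ) ≤ u) h4 hp0.le
        rw [hψu, hψs]
        push_cast
        exact h5
      have hiN : i < N := by
        have h5 : u < Ψ ^ q := by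
          rw [hu]
          exact Real.rpow_lt_rpow hψ0.le hcase hq0
        have h7 : (u - u₀)/e < (Ψ^q - u₀)/e := by gcongr
        have h8 : (Ψ^q - u₀)/e ≤ (N:ℝ) := Nat.le_ceil _
        have h9 : (i:ℝ) < (N:ℝ) := lt_of_le_of_lt hfl (lt_of_lt_of_le h7 h8)
        exact_mod_cast h9
      have hdispi := hdisp i ψ hmem1 hmem2
      refine Set.mem_iUnion₂.mpr ⟨i, Finset.mem_range.mpr hiN, ?_⟩
      simp only [hSqi, Set.mem_prod, Set.mem_Icc]
      cases' abs_le.mp hdispi.1 with a1 a2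
      cases' abs_le.mp hdispi.2 with b1 b2
      cases' abs_le.mp hd1.le with c1 c2
      cases' abs_le.mp hd2.le with d1 d2
      constructor
      · constructor <;> simp only [hR] <;> linarith
      · constructor <;> simp only [hR] <;> linarith
  -- volume computation
  have hRpos : 0 < R := by simp only [hR]; positivity
  have hRinpos : 0 < Rin := by
    have : (0:ℝ) < Ψ ^ (-α) := Real.rpow_pos_of_pos hΨpos _
    simp only [hRin]; positivity
  have hvolSqin : MeasureTheory.volume Sqin = ENNReal.ofReal (4 * Rin^2) := by
    rw [hSqin, MeasureTheory.Measure.volume_eq_prod, MeasureTheory.Measure.prod_prod,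
      Real.volume_Icc, ← ENNReal.ofReal_mul (by linarith)]
    congr 1
    ring
  have hvolSqi : ∀ i : ℕ, MeasureTheory.volume (Sqi i) = ENNReal.ofReal (4 * R^2) := by
    intro i
    rw [hSqi]
    simp only
    rw [MeasureTheory.Measure.volume_eq_prod, MeasureTheory.Measure.prod_prod,
      Real.volume_Icc, Real.volume_Icc]
    have h1 : γ₁ (ψs i) + R - (γ₁ (ψs i) - R) = 2*R := by ring
    have h2 : γ₂ (ψs i) + R - (γ₂ (ψs i) - R) = 2*R := by ring
    rw [h1, h2, ← ENNReal.ofReal_mul (by linarith)]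
    congr 1
    ring
  have hvol : MeasureTheory.volume (euclNbhd Γ' e)
      ≤ ENNReal.ofReal (4 * Rin^2) + ENNReal.ofReal ((N:ℝ) * (4 * R^2)) := by
    refine le_trans (MeasureTheory.measure_mono hcover) ?_
    refine le_trans (MeasureTheory.measure_union_le _ _) ?_
    gcongr
    · exact le_of_eq hvolSqin
    · refine le_trans (MeasureTheory.measure_biUnion_finset_le _ _) ?_
      rw [Finset.sum_congr rfl (fun i _ => hvolSqi i), Finset.sum_const, Finset.card_range,
        nsmul_eq_mul]
      rw [← ENNReal.ofReal_natCast N, ← ENNReal.ofReal_mul (by positivity)]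
  refine le_trans hvol ?_
  rw [← ENNReal.ofReal_add (by positivity) (by positivity)]
  apply ENNReal.ofReal_le_ofReal
  -- final real arithmetic
  have hκe : e ^ (2 - 2/(1+α)) = e ^ κ * e ^ κ := by
    rw [← Real.rpow_add he0]
    congr 1
    rw [hκ]
    field_simp
    ring
  have hκpos : (0:ℝ) < e ^ κ := Real.rpow_pos_of_pos he0 _
  have hΨα : Ψ ^ (-α) = e ^ κ := by
    rw [hΨ, ← Real.rpow_mul he0.le]
    congr 1
    rw [hκ]
    field_simp
  have heκ : e ≤ e ^ κ := by
    have h1 : e ^ (1:ℝ) ≤ e ^ κ := by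
      apply Real.rpow_le_rpow_of_exponent_ge he0 he1.le
      rw [hκ, div_le_one h1α]
      linarith
    rwa [Real.rpow_one] at h1
  have hRinXle : Rin ≤ (m'+1) * e ^ κ := by
    rw [hRin, hΨα]
    have : (m'+1) * e ^ κ = m' * e ^ κ + e ^ κ := by ring
    linarith
  have hNle : (N:ℝ) ≤ Ψ^q/e + 1 := by
    have h1 : N ≤ ⌈Ψ^q/e⌉₊ := Nat.ceil_mono (by gcongr; linarith [hu₀pos])
    have h2 : (⌈Ψ^q/e⌉₊:ℝ) < Ψ^q/e + 1 :=
      Nat.ceil_lt_add_one (by positivity)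
    have h3 : (N:ℝ) ≤ (⌈Ψ^q/e⌉₊:ℝ) := by exact_mod_cast h1
    linarith
  have hΨqe : e * Ψ^q = e ^ κ * e ^ κ := by
    have h1 : Ψ^q = e ^ (-(1/(1+α))*q) := by rw [hΨ, ← Real.rpow_mul he0.le]
    have h2 : e * Ψ^q = e ^ (1 + -(1/(1+α))*q) := by
      rw [Real.rpow_add he0, Real.rpow_one, h1]
    rw [h2, ← Real.rpow_add he0]
    congr 1
    rw [hκ, hq]
    field_simp
    ring
  rw [hκe]
  have hsq : 4*Rin^2 ≤ 4*(m'+1)^2*(e^κ*e^κ) := by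
    have h3 : Rin * Rin ≤ ((m'+1)*e^κ) * ((m'+1)*e^κ) :=
      mul_le_mul hRinXle hRinXle hRinpos.le (by positivity)
    calc 4*Rin^2 = 4*(Rin*Rin) := by ring
      _ ≤ 4*(((m'+1)*e^κ)*((m'+1)*e^κ)) := by linarith
      _ = 4*(m'+1)^2*(e^κ*e^κ) := by ring
  have hR2 : 4*R^2 = 4*(K₁+1)^2*(e*e) := by rw [hR]; ring
  have h7 : e*e ≤ e^κ*e^κ := mul_le_mul heκ heκ he0.le hκpos.le
  have hterm2 : (N:ℝ)*(4*R^2) ≤ 8*(K₁+1)^2*(e^κ*e^κ) := by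
    have h5 : (N:ℝ)*(4*R^2) ≤ (Ψ^q/e + 1)*(4*R^2) :=
      mul_le_mul_of_nonneg_right hNle (by positivity)
    have h6 : (Ψ^q/e + 1)*(4*(K₁+1)^2*(e*e)) = 4*(K₁+1)^2*(e*Ψ^q) + 4*(K₁+1)^2*(e*e) := by
      field_simp
    calc (N:ℝ)*(4*R^2) ≤ (Ψ^q/e + 1)*(4*R^2) := h5
      _ = 4*(K₁+1)^2*(e*Ψ^q) + 4*(K₁+1)^2*(e*e) := by rw [hR2, h6]
      _ ≤ 4*(K₁+1)^2*(e^κ*e^κ) + 4*(K₁+1)^2*(e^κ*e^κ) := by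
          rw [hΨqe]
          have h8 := mul_le_mul_of_nonneg_left h7 (by positivity : (0:ℝ) ≤ 4*(K₁+1)^2)
          linarith
      _ = 8*(K₁+1)^2*(e^κ*e^κ) := by ring
  rw [hCdef]
  linarith [hsq, hterm2]


open Asymptotics in
/-- Box dimension of a wavy spiral (Theorem `biliplema`). -/
theorem box_dimension_of_wavy_spiral
    (t₀ α ε : ℝ) (ht₀ : 0 < t₀) (hα : α ∈ Set.Ioo (0 : ℝ) 1) (hε : 0 < ε)
    (r : ℝ → ℝ)
    (hr_pos : ∀ s ≥ t₀, 0 < r s)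
    (hr_smooth : ContDiffOn ℝ 1 r (Set.Ici t₀))
    (hr'_t₀ : derivWithin r (Set.Ici t₀) t₀ ≤ 0)
    -- the inductively defined sequence (tₙ) of Definition `def_wavy_function`
    (t : ℕ → ℝ) (ht_init : t 0 = t₀)
    (ht_odd : ∀ k : ℕ,
      {s : ℝ | t (2 * k) < s ∧ 0 < derivWithin r (Set.Ici t₀) s}.Nonempty ∧
      t (2 * k + 1) = sInf {s : ℝ | t (2 * k) < s ∧ 0 < derivWithin r (Set.Ici t₀) s})
    (ht_even : ∀ k : ℕ,
      {s : ℝ | t (2 * k + 1) < s ∧ r s = r (t (2 * k + 1))}.Nonempty ∧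
      t (2 * k + 2) = sInf {s : ℝ | t (2 * k + 1) < s ∧ r s = r (t (2 * k + 1))})
    -- waviness condition (i), (ii), (iii)
    (ht_mono : StrictMono t)
    (ht_top : Filter.Tendsto t Filter.atTop Filter.atTop)
    (ht_gap : ∀ k : ℕ, ε ≤ t (2 * k + 1) - t (2 * k))
    (ht_osc : (fun k : ℕ =>
        sSup (r '' Set.Icc (t (2 * k + 1)) (t (2 * k + 2))) -
        sInf (r '' Set.Icc (t (2 * k + 1)) (t (2 * k + 2))))
      =o[Filter.atTop] fun k : ℕ => t (2 * k + 1) ^ (-α - 1))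
    -- the angle function φ
    (φ₀ : ℝ) (hφ₀ : 0 < φ₀)
    (φ : ℝ → ℝ)
    (hφ_mono : StrictMonoOn φ (Set.Ici t₀))
    (hφ_smooth : ContDiffOn ℝ 1 φ (Set.Ici t₀))
    (hφ_init : φ t₀ = φ₀)
    (hφ_surj : φ '' Set.Ici t₀ = Set.Ici φ₀)
    (φb : ℝ)
    (hφ_asym : Filter.Tendsto (fun s => (φ s - φb) - (s - t₀)) Filter.atTop (nhds 0))
    -- the spiral r = f(φ)
    (f : ℝ → ℝ)
    (hf_pos : ∀ ψ ≥ φ₀, 0 < f ψ)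
    (hf_diff : DifferentiableOn ℝ f (Set.Ici φ₀))
    (hf_r : ∀ s ≥ t₀, f (φ s) = r s)
    (hf_lim : Filter.Tendsto f Filter.atTop (nhds 0))
    (hf_rad : ∀ ψ ≥ φ₀, StrictAnti (fun k : ℕ => f (ψ + 2 * (k : ℝ) * Real.pi)))
    -- constants
    (ε' θ : ℝ) (hε' : 0 < ε' ∧ ε' < ε) (hθ : θ = min ε' Real.pi)
    (m m' a' M : ℝ) (hm : 0 < m) (hm' : 0 < m') (ha' : 0 < a') (hM : 0 < M)
    (hf_bound : ∀ ψ ≥ φ₀, m * ψ ^ (-α) ≤ f ψ ∧ f ψ ≤ m' * ψ ^ (-α))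
    (hf'_bound : ∀ ψ ≥ φ₀, |derivWithin f (Set.Ici φ₀) ψ| ≤ M * ψ ^ (-α - 1))
    (hf_dec : ∀ ψ ≥ φ₀, ∀ Δ : ℝ, θ ≤ Δ → Δ ≤ 2 * Real.pi + θ →
      a' * ψ ^ (-α - 1) ≤ f ψ - f (ψ + Δ))
    (Γ' : Set (ℝ × ℝ))
    (hΓ' : Γ' = {P : ℝ × ℝ | ∃ ψ ≥ φ₀, P = (f ψ * Real.cos ψ, f ψ * Real.sin ψ)}) :
    lowerBoxDim Γ' = 2 / (1 + α) ∧ upperBoxDim Γ' = 2 / (1 + α) := by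
  obtain ⟨hα0, hα1⟩ := hα
  have hf_ub : ∀ ψ ≥ φ₀, |f ψ| ≤ m' * ψ ^ (-α) := by
    intro ψ hψ
    rw [abs_of_pos (hf_pos ψ hψ)]
    exact (hf_bound ψ hψ).2
  have hf_lb : ∀ ψ ≥ φ₀, m * ψ ^ (-α) ≤ f ψ := fun ψ hψ => (hf_bound ψ hψ).1
  obtain ⟨C, hC, hup⟩ := spiral_vol_upper_s3 α φ₀ m' M hα0 hα1 hφ₀ hm' hM f
    hf_diff hf_ub hf'_bound Γ' hΓ'
  obtain ⟨c, hc, hlo⟩ := spiral_vol_lower_s3 α φ₀ m M hα0 hα1 hφ₀ hm hM f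
    hf_pos hf_diff hf_lb hf'_bound hf_lim Γ' hΓ'
  exact dim_from_bounds Γ' (2/(1+α)) C c (by positivity) hC hc hup hlo
end

section
/- Let α > 1, t₀ > 0, and let p : [t₀,∞) → (0,∞) be a C³ function with p(t)·t^{α} → 1, p′(t)/(−α t^{−α−1}) → 1, p″(t)/(α(α+1) t^{−α−2}) → 1 and p‴(t)/(−α(α+1)(α+2) t^{−α−3}) → 1 as t → ∞ (i.e. p(t) ∼₃ t^{−α}). Define x : [t₀,∞) → ℝ by x(t) = p(t)·sin t, so x′(t) = p′(t)·sin t + p(t)·cos t. Then the planar curve t ↦ (x(t), x′(t)), t ∈ [t₀,∞), is rectifiable: sup{ Σ_{i=1}^{m} ‖(x(uᵢ), x′(uᵢ)) − (x(u_{i−1}), x′(u_{i−1}))‖ : t₀ ≤ u₀ < u₁ < … < u_m, m ∈ ℕ } < ∞. -/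
open Set Filter Real

lemma my_sqrt_le (a b : ℝ) : Real.sqrt (a ^ 2 + b ^ 2) ≤ |a| + |b| := by
  have h : a ^ 2 + b ^ 2 ≤ (|a| + |b|) ^ 2 := by
    nlinarith [abs_nonneg a, abs_nonneg b, sq_abs a, sq_abs b]
  calc Real.sqrt (a ^ 2 + b ^ 2) ≤ Real.sqrt ((|a| + |b|) ^ 2) := Real.sqrt_le_sqrt h
    _ = |a| + |b| := Real.sqrt_sq (by positivity)

lemma my_var_bound {α K t₀ : ℝ} (hα : 1 < α) (ht₀ : 0 < t₀) (hK : 0 ≤ K)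
    {f g : ℝ → ℝ}
    (hf : ∀ s ∈ Set.Ioi t₀, HasDerivAt f (g s) s)
    (hb : ∀ s ∈ Set.Ioi t₀, |g s| ≤ K * s ^ (-α))
    {a b : ℝ} (ha : t₀ < a) (hab : a ≤ b) :
    |f b - f a| ≤ K / (α - 1) * a ^ (1 - α) - K / (α - 1) * b ^ (1 - α) := by
  set G : ℝ → ℝ := fun t => -(K / (α - 1)) * t ^ (1 - α) with hGdef
  have hG : ∀ s ∈ Set.Ioi t₀, HasDerivAt G (K * s ^ (-α)) s := by
    intro s hs
    have hs0 : (0:ℝ) < s := ht₀.trans hs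
    have h1 : HasDerivAt (fun t : ℝ => t ^ (1 - α)) ((1 - α) * s ^ (1 - α - 1)) s :=
      Real.hasDerivAt_rpow_const (Or.inl hs0.ne')
    have h2 := h1.const_mul (-(K / (α - 1)))
    refine h2.congr_deriv ?_
    rw [show (1 - α - 1) = -α by ring]
    have hne : α - 1 ≠ 0 := by linarith
    field_simp
    ring
  have key : ∀ c : ℝ, c = 1 ∨ c = -1 →
      MonotoneOn (fun t => G t + c * f t) (Set.Ici a) := by
    intro c hc
    have hmem : ∀ s ∈ Set.Ici a, s ∈ Set.Ioi t₀ := fun s hs => lt_of_lt_of_le ha hs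
    have hder : ∀ s ∈ Set.Ioi t₀, HasDerivAt (fun t => G t + c * f t)
        (K * s ^ (-α) + c * g s) s := fun s hs =>
      (hG s hs).add ((hf s hs).const_mul c)
    apply monotoneOn_of_deriv_nonneg (convex_Ici a)
    · intro s hs
      exact ((hder s (hmem s hs)).continuousAt).continuousWithinAt
    · rw [interior_Ici]
      intro s hs
      exact ((hder s (hmem s (Set.Ioi_subset_Ici_self hs))).differentiableAt).differentiableWithinAt
    · rw [interior_Ici]
      intro s hs
      rw [(hder s (hmem s (Set.Ioi_subset_Ici_self hs))).deriv]
      have h1 := abs_le.mp (hb s (hmem s (Set.Ioi_subset_Ici_self hs)))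
      rcases hc with rfl | rfl
      · linarith [h1.1]
      · linarith [h1.2]
  have m1 := key 1 (Or.inl rfl) (self_mem_Ici (a := a)) hab hab
  have m2 := key (-1) (Or.inr rfl) (self_mem_Ici (a := a)) hab hab
  simp only [one_mul, neg_one_mul, hGdef] at m1 m2
  rw [abs_le]
  constructor <;> [linarith; linarith]

/-- Chirp–spiral comparison, part (ii) of Theorem `s-c-p`:
for `α > 1` the phase curve `t ↦ (x(t), x′(t))` of `x(t) = p(t) sin t`,
`p(t) ∼₃ t^{-α}`, is rectifiable: the sums of Euclidean lengths over finite
increasing sequences of parameters in `[t₀,∞)` are uniformly bounded. -/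
theorem phase_curve_rectifiable_of_chirp
    (α t₀ : ℝ) (hα : 1 < α) (ht₀ : 0 < t₀)
    (p : ℝ → ℝ)
    (hp_pos : ∀ s ≥ t₀, 0 < p s)
    (hp_smooth : ContDiffOn ℝ 3 p (Set.Ici t₀))
    -- p(t) ∼₃ t^{-α} as t → ∞
    (hp0 : Filter.Tendsto (fun s => p s * s ^ α) Filter.atTop (nhds 1))
    (hp1 : Filter.Tendsto (fun s => deriv p s / (-α * s ^ (-α - 1)))
      Filter.atTop (nhds 1))
    (hp2 : Filter.Tendsto (fun s => deriv (deriv p) s / (α * (α + 1) * s ^ (-α - 2)))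
      Filter.atTop (nhds 1))
    (hp3 : Filter.Tendsto
      (fun s => deriv (deriv (deriv p)) s / (-(α * (α + 1) * (α + 2)) * s ^ (-α - 3)))
      Filter.atTop (nhds 1))
    (x x' : ℝ → ℝ)
    (hx : ∀ s, x s = p s * Real.sin s)
    (hx' : ∀ s, x' s = deriv p s * Real.sin s + p s * Real.cos s) :
    ∃ L : ℝ, ∀ (m : ℕ) (u : ℕ → ℝ), t₀ ≤ u 0 → StrictMono u →
      ∑ i ∈ Finset.range m,
        Real.sqrt ((x (u (i + 1)) - x (u i)) ^ 2 + (x' (u (i + 1)) - x' (u i)) ^ 2) ≤ L := by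
  have hα0 : (0:ℝ) < α := by linarith
  -- eventual (tail) bounds from the asymptotics
  have h0 : ∀ᶠ s in atTop, |p s * s ^ α - 1| < 1 := by
    have := Metric.tendsto_nhds.mp hp0 1 one_pos
    simpa [Real.dist_eq] using this
  have h1 : ∀ᶠ s in atTop, |deriv p s / (-α * s ^ (-α - 1)) - 1| < 1 := by
    have := Metric.tendsto_nhds.mp hp1 1 one_pos
    simpa [Real.dist_eq] using this
  have h2 : ∀ᶠ s in atTop, |deriv (deriv p) s / (α * (α + 1) * s ^ (-α - 2)) - 1| < 1 := by
    have := Metric.tendsto_nhds.mp hp2 1 one_pos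
    simpa [Real.dist_eq] using this
  obtain ⟨N, hN⟩ := eventually_atTop.mp ((h0.and h1).and h2)
  set T : ℝ := max N (max (t₀ + 1) 1) with hTdef
  have hTt₀ : t₀ < T := lt_of_lt_of_le (by linarith) (le_trans (le_max_left _ _) (le_max_right _ _))
  have hT1 : (1:ℝ) ≤ T := le_trans (le_max_right _ _) (le_max_right _ _)
  have hT0 : (0:ℝ) < T := lt_of_lt_of_le one_pos hT1
  have htail : ∀ s : ℝ, T ≤ s →
      |p s| ≤ 2 * s ^ (-α) ∧ |deriv p s| ≤ 2 * α * s ^ (-α - 1) ∧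
      |deriv (deriv p) s| ≤ 2 * (α * (α + 1)) * s ^ (-α - 2) := by
    intro s hs
    have hsN : N ≤ s := le_trans (le_max_left _ _) hs
    have hs0 : (0:ℝ) < s := lt_of_lt_of_le hT0 hs
    obtain ⟨⟨e0, e1⟩, e2⟩ := hN s hsN
    have key : ∀ (n d : ℝ), d ≠ 0 → |n / d - 1| < 1 → |n| ≤ 2 * |d| := by
      intro n d hd h
      have h2 : |n / d| ≤ 2 := by
        have := abs_sub_abs_le_abs_sub (n / d) 1
        simp only [abs_one] at this
        linarith
      calc |n| = |n / d| * |d| := by rw [← abs_mul, div_mul_cancel₀ _ hd]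
        _ ≤ 2 * |d| := mul_le_mul_of_nonneg_right h2 (abs_nonneg d)
    refine ⟨?_, ?_, ?_⟩
    · have hd : (s:ℝ) ^ α ≠ 0 := (Real.rpow_pos_of_pos hs0 α).ne'
      have := key (p s * s ^ α) 1 one_ne_zero (by simpa using e0)
      have h3 : |p s| * s ^ α ≤ 2 := by
        rw [abs_one, mul_one] at this
        calc |p s| * s ^ α = |p s * s ^ α| := by
              rw [abs_mul, abs_of_pos (Real.rpow_pos_of_pos hs0 α)]
          _ ≤ 2 := this
      have h4 : s ^ (-α) = (s ^ α)⁻¹ := by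
        rw [Real.rpow_neg hs0.le]
      rw [h4, ← div_eq_mul_inv, le_div_iff₀ (Real.rpow_pos_of_pos hs0 α)]
      exact h3
    · have hd : -α * s ^ (-α - 1) ≠ 0 := by
        have := Real.rpow_pos_of_pos hs0 (-α - 1)
        intro h
        apply absurd h
        simp only [mul_eq_zero, neg_eq_zero, not_or]
        exact ⟨hα0.ne', this.ne'⟩
      have := key _ _ hd e1
      calc |deriv p s| ≤ 2 * |(-α * s ^ (-α - 1))| := this
        _ = 2 * α * s ^ (-α - 1) := by
            rw [abs_mul, abs_neg, abs_of_pos hα0,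
              abs_of_pos (Real.rpow_pos_of_pos hs0 _)]
            ring
    · have hd : α * (α + 1) * s ^ (-α - 2) ≠ 0 := by positivity
      have := key _ _ hd e2
      calc |deriv (deriv p) s| ≤ 2 * |α * (α + 1) * s ^ (-α - 2)| := this
        _ = 2 * (α * (α + 1)) * s ^ (-α - 2) := by
            rw [abs_mul, abs_mul, abs_of_pos hα0, abs_of_pos (by linarith : (0:ℝ) < α + 1),
              abs_of_pos (Real.rpow_pos_of_pos hs0 _)]
            ring
  -- smoothness facts on the open ray
  have hops : ContDiffOn ℝ 3 p (Set.Ioi t₀) := hp_smooth.mono Set.Ioi_subset_Ici_self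
  have hps2 : ContDiffOn ℝ 2 (deriv p) (Set.Ioi t₀) :=
    hops.deriv_of_isOpen isOpen_Ioi (by norm_num)
  have hCp : ∀ s ∈ Set.Ioi t₀, HasDerivAt p (deriv p s) s := by
    intro s hs
    exact ((hops.contDiffAt (isOpen_Ioi.mem_nhds hs)).differentiableAt (by norm_num)).hasDerivAt
  have hCdp : ∀ s ∈ Set.Ioi t₀, HasDerivAt (deriv p) (deriv (deriv p) s) s := by
    intro s hs
    exact ((hps2.contDiffAt (isOpen_Ioi.mem_nhds hs)).differentiableAt (by norm_num)).hasDerivAt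
  -- bounds on the compact part [t₀, T]
  have hq1s : ContDiffOn ℝ 2 (derivWithin p (Set.Ici t₀)) (Set.Ici t₀) :=
    hp_smooth.derivWithin (uniqueDiffOn_Ici t₀) (by norm_num)
  have hq2s : ContDiffOn ℝ 1
      (derivWithin (derivWithin p (Set.Ici t₀)) (Set.Ici t₀)) (Set.Ici t₀) :=
    hq1s.derivWithin (uniqueDiffOn_Ici t₀) (by norm_num)
  obtain ⟨M0, hM0⟩ := (isCompact_Icc (a := t₀) (b := T)).exists_bound_of_continuousOn
    (hp_smooth.continuousOn.mono Set.Icc_subset_Ici_self)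
  obtain ⟨M1, hM1⟩ := (isCompact_Icc (a := t₀) (b := T)).exists_bound_of_continuousOn
    (hq1s.continuousOn.mono Set.Icc_subset_Ici_self)
  obtain ⟨M2, hM2⟩ := (isCompact_Icc (a := t₀) (b := T)).exists_bound_of_continuousOn
    (hq2s.continuousOn.mono Set.Icc_subset_Ici_self)
  set M : ℝ := max 0 (max M0 (max M1 M2)) with hMdef
  have hM : 0 ≤ M := le_max_left _ _
  have hd1 : ∀ s ∈ Set.Ioi t₀, derivWithin p (Set.Ici t₀) s = deriv p s :=
    fun s hs => derivWithin_of_mem_nhds (Ici_mem_nhds hs)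
  have hd2 : ∀ s ∈ Set.Ioi t₀,
      derivWithin (derivWithin p (Set.Ici t₀)) (Set.Ici t₀) s = deriv (deriv p) s := by
    intro s hs
    rw [derivWithin_of_mem_nhds (Ici_mem_nhds hs)]
    apply Filter.EventuallyEq.deriv_eq
    filter_upwards [isOpen_Ioi.mem_nhds hs] with t ht
    exact hd1 t ht
  have hmid : ∀ s, t₀ < s → s ≤ T →
      |p s| ≤ M ∧ |deriv p s| ≤ M ∧ |deriv (deriv p) s| ≤ M := by
    intro s hs hsT
    have hmem : s ∈ Set.Icc t₀ T := ⟨hs.le, hsT⟩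
    have hin : s ∈ Set.Ioi t₀ := hs
    refine ⟨?_, ?_, ?_⟩
    · have h := hM0 s hmem
      rw [Real.norm_eq_abs] at h
      exact h.trans (le_trans (le_max_left M0 _) (le_max_right 0 _))
    · have h := hM1 s hmem
      rw [Real.norm_eq_abs, hd1 s hin] at h
      exact h.trans (le_trans (le_trans (le_max_left M1 M2) (le_max_right M0 _))
        (le_max_right 0 _))
    · have h := hM2 s hmem
      rw [Real.norm_eq_abs, hd2 s hin] at h
      exact h.trans (le_trans (le_trans (le_max_right M1 M2) (le_max_right M0 _))
        (le_max_right 0 _))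
  -- master pointwise bound on (t₀, ∞)
  set K' : ℝ := M * T ^ α + (2 + 2 * α + 2 * (α * (α + 1))) with hK'def
  have hMT : 0 ≤ M * T ^ α := mul_nonneg hM (Real.rpow_nonneg hT0.le α)
  have hK'0 : 0 ≤ K' := by
    rw [hK'def]; nlinarith
  have hmaster : ∀ s ∈ Set.Ioi t₀,
      |p s| ≤ K' * s ^ (-α) ∧ |deriv p s| ≤ K' * s ^ (-α) ∧
      |deriv (deriv p) s| ≤ K' * s ^ (-α) := by
    intro s hs
    have hs0 : (0:ℝ) < s := ht₀.trans hs
    have hsp : (0:ℝ) < s ^ (-α) := Real.rpow_pos_of_pos hs0 _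
    by_cases hsT : s ≤ T
    · obtain ⟨m0, m1, m2⟩ := hmid s hs hsT
      have h1 : T ^ (-α) ≤ s ^ (-α) :=
        Real.rpow_le_rpow_of_nonpos hs0 hsT (by linarith)
      have h2 : (1:ℝ) ≤ T ^ α * s ^ (-α) := by
        have he : T ^ α * T ^ (-α) = 1 := by
          rw [← Real.rpow_add hT0]; simp
        calc (1:ℝ) = T ^ α * T ^ (-α) := he.symm
          _ ≤ T ^ α * s ^ (-α) :=
              mul_le_mul_of_nonneg_left h1 (Real.rpow_nonneg hT0.le α)
      have hMle : M ≤ K' * s ^ (-α) := by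
        have e1 : M * 1 ≤ M * (T ^ α * s ^ (-α)) := mul_le_mul_of_nonneg_left h2 hM
        have e2 : (0:ℝ) ≤ (2 + 2 * α + 2 * (α * (α + 1))) * s ^ (-α) := by positivity
        have e3 : K' * s ^ (-α)
            = M * (T ^ α * s ^ (-α)) + (2 + 2 * α + 2 * (α * (α + 1))) * s ^ (-α) := by
          rw [hK'def]; ring
        linarith
      exact ⟨m0.trans hMle, m1.trans hMle, m2.trans hMle⟩
    · push_neg at hsT
      obtain ⟨m0, m1, m2⟩ := htail s hsT.le
      have hs1 : (1:ℝ) ≤ s := le_trans hT1 hsT.le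
      have e1 : s ^ (-α - 1) ≤ s ^ (-α) :=
        Real.rpow_le_rpow_of_exponent_le hs1 (by linarith)
      have e2 : s ^ (-α - 2) ≤ s ^ (-α) :=
        Real.rpow_le_rpow_of_exponent_le hs1 (by linarith)
      have hp1 : (0:ℝ) < s ^ (-α - 1) := Real.rpow_pos_of_pos hs0 _
      have hp2 : (0:ℝ) < s ^ (-α - 2) := Real.rpow_pos_of_pos hs0 _
      refine ⟨?_, ?_, ?_⟩
      · refine m0.trans ?_
        apply mul_le_mul_of_nonneg_right _ hsp.le
        rw [hK'def]; nlinarith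
      · refine m1.trans ?_
        calc 2 * α * s ^ (-α - 1) ≤ 2 * α * s ^ (-α) :=
              mul_le_mul_of_nonneg_left e1 (by positivity)
          _ ≤ K' * s ^ (-α) := by
              apply mul_le_mul_of_nonneg_right _ hsp.le
              rw [hK'def]; nlinarith
      · refine m2.trans ?_
        calc 2 * (α * (α + 1)) * s ^ (-α - 2) ≤ 2 * (α * (α + 1)) * s ^ (-α) :=
              mul_le_mul_of_nonneg_left e2 (by positivity)
          _ ≤ K' * s ^ (-α) := by
              apply mul_le_mul_of_nonneg_right _ hsp.le
              rw [hK'def]; nlinarith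
  set K : ℝ := 4 * K' with hKdef
  have hK0 : 0 ≤ K := by rw [hKdef]; linarith
  -- derivatives of x and x'
  have hXd : ∀ s ∈ Set.Ioi t₀, HasDerivAt x (x' s) s := by
    intro s hs
    have h := (hCp s hs).mul (Real.hasDerivAt_sin s)
    rw [hx' s]
    exact h.congr_of_eventuallyEq (Filter.Eventually.of_forall hx)
  have hX'd : ∀ s ∈ Set.Ioi t₀, HasDerivAt x'
      ((deriv (deriv p) s * Real.sin s + deriv p s * Real.cos s) +
        (deriv p s * Real.cos s + p s * (-Real.sin s))) s := by
    intro s hs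
    have h := ((hCdp s hs).mul (Real.hasDerivAt_sin s)).add
      ((hCp s hs).mul (Real.hasDerivAt_cos s))
    exact h.congr_of_eventuallyEq (Filter.Eventually.of_forall hx')
  -- bounds on the derivatives
  have habs : ∀ a b : ℝ, |a * Real.sin b| ≤ |a| ∧ |a * Real.cos b| ≤ |a| := by
    intro a b
    constructor
    · rw [abs_mul]
      exact mul_le_of_le_one_right (abs_nonneg a) (Real.abs_sin_le_one b)
    · rw [abs_mul]
      exact mul_le_of_le_one_right (abs_nonneg a) (Real.abs_cos_le_one b)
  have hbx : ∀ s ∈ Set.Ioi t₀, |x' s| ≤ K * s ^ (-α) := by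
    intro s hs
    obtain ⟨m0, m1, _⟩ := hmaster s hs
    rw [hx' s]
    have h1 := (habs (deriv p s) s).1
    have h2 := (habs (p s) s).2
    have hsp : (0:ℝ) < s ^ (-α) := Real.rpow_pos_of_pos (ht₀.trans hs) _
    calc |deriv p s * Real.sin s + p s * Real.cos s|
        ≤ |deriv p s * Real.sin s| + |p s * Real.cos s| := abs_add_le _ _
      _ ≤ K' * s ^ (-α) + K' * s ^ (-α) := by
          refine add_le_add (h1.trans m1) (h2.trans m0)
      _ ≤ K * s ^ (-α) := by rw [hKdef]; nlinarith
  have hbx' : ∀ s ∈ Set.Ioi t₀,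
      |(deriv (deriv p) s * Real.sin s + deriv p s * Real.cos s) +
        (deriv p s * Real.cos s + p s * (-Real.sin s))| ≤ K * s ^ (-α) := by
    intro s hs
    obtain ⟨m0, m1, m2⟩ := hmaster s hs
    have h1 := (habs (deriv (deriv p) s) s).1
    have h2 := (habs (deriv p s) s).2
    have h3 : |p s * (-Real.sin s)| ≤ |p s| := by
      rw [show p s * (-Real.sin s) = -(p s * Real.sin s) by ring, abs_neg]
      exact (habs (p s) s).1
    have hsp : (0:ℝ) < s ^ (-α) := Real.rpow_pos_of_pos (ht₀.trans hs) _
    calc |(deriv (deriv p) s * Real.sin s + deriv p s * Real.cos s) +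
        (deriv p s * Real.cos s + p s * (-Real.sin s))|
        ≤ |deriv (deriv p) s * Real.sin s + deriv p s * Real.cos s| +
          |deriv p s * Real.cos s + p s * (-Real.sin s)| := abs_add_le _ _
      _ ≤ (|deriv (deriv p) s * Real.sin s| + |deriv p s * Real.cos s|) +
          (|deriv p s * Real.cos s| + |p s * (-Real.sin s)|) :=
          add_le_add (abs_add_le _ _) (abs_add_le _ _)
      _ ≤ (K' * s ^ (-α) + K' * s ^ (-α)) + (K' * s ^ (-α) + K' * s ^ (-α)) := by
          refine add_le_add (add_le_add (h1.trans m2) (h2.trans m1))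
            (add_le_add (h2.trans m1) (h3.trans m0))
      _ ≤ K * s ^ (-α) := by rw [hKdef]; nlinarith
  -- variation bounds
  have hvarx : ∀ a b : ℝ, t₀ < a → a ≤ b →
      |x b - x a| ≤ K / (α - 1) * a ^ (1 - α) - K / (α - 1) * b ^ (1 - α) :=
    fun a b ha hab => my_var_bound hα ht₀ hK0 hXd hbx ha hab
  have hvarx' : ∀ a b : ℝ, t₀ < a → a ≤ b →
      |x' b - x' a| ≤ K / (α - 1) * a ^ (1 - α) - K / (α - 1) * b ^ (1 - α) :=
    fun a b ha hab => my_var_bound hα ht₀ hK0 hX'd hbx' ha hab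
  -- uniform value bound
  set Bv : ℝ := K * t₀ ^ (-α) + (|x t₀| + |x' t₀|) with hBvdef
  have hKt₀ : (0:ℝ) ≤ K * t₀ ^ (-α) := mul_nonneg hK0 (Real.rpow_nonneg ht₀.le _)
  have hBv0 : 0 ≤ Bv := by
    rw [hBvdef]
    have := abs_nonneg (x t₀); have := abs_nonneg (x' t₀); linarith
  have hvals : ∀ s, t₀ ≤ s → |x s| ≤ Bv ∧ |x' s| ≤ Bv := by
    intro s hs
    rcases eq_or_lt_of_le hs with rfl | hlt
    · constructor
      · rw [hBvdef]; have h1 := abs_nonneg (x' t₀); linarith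
      · rw [hBvdef]; have h1 := abs_nonneg (x t₀); linarith
    · have hin : s ∈ Set.Ioi t₀ := hlt
      have hs0 : (0:ℝ) < s := ht₀.trans hlt
      have hmono : s ^ (-α) ≤ t₀ ^ (-α) :=
        Real.rpow_le_rpow_of_nonpos ht₀ hlt.le (by linarith)
      have habs0 := abs_nonneg (x t₀)
      have habs1 := abs_nonneg (x' t₀)
      constructor
      · obtain ⟨m0, _, _⟩ := hmaster s hin
        have h1 := (habs (p s) s).1
        rw [hx s] at *
        have : |p s * Real.sin s| ≤ K' * s ^ (-α) := h1.trans m0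
        have hle : K' * s ^ (-α) ≤ K * t₀ ^ (-α) := by
          have e1 : K' * s ^ (-α) ≤ K' * t₀ ^ (-α) :=
            mul_le_mul_of_nonneg_left hmono hK'0
          have e2 : K' * t₀ ^ (-α) ≤ K * t₀ ^ (-α) := by
            apply mul_le_mul_of_nonneg_right _ (Real.rpow_nonneg ht₀.le _)
            rw [hKdef]; linarith
          linarith
        rw [hBvdef]; linarith
      · have hb := hbx s hin
        have hle : K * s ^ (-α) ≤ K * t₀ ^ (-α) := mul_le_mul_of_nonneg_left hmono hK0
        rw [hBvdef]; linarith
  -- final bound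
  refine ⟨4 * Bv + 2 * (K / (α - 1) * t₀ ^ (1 - α)), ?_⟩
  intro m u hu0 hum
  have hKα : (0:ℝ) ≤ K / (α - 1) := div_nonneg hK0 (by linarith)
  have hDt₀ : (0:ℝ) ≤ K / (α - 1) * t₀ ^ (1 - α) :=
    mul_nonneg hKα (Real.rpow_nonneg ht₀.le _)
  have hui : ∀ i : ℕ, 1 ≤ i → t₀ < u i := by
    intro i hi
    exact lt_of_le_of_lt hu0 (hum (Nat.pos_of_ne_zero (by omega)))
  cases m with
  | zero =>
    simp only [Finset.range_zero, Finset.sum_empty]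
    linarith
  | succ k =>
    rw [Finset.sum_range_succ']
    have hterm0 : Real.sqrt ((x (u (0 + 1)) - x (u 0)) ^ 2 + (x' (u (0 + 1)) - x' (u 0)) ^ 2)
        ≤ 4 * Bv := by
      have h1 := my_sqrt_le (x (u (0 + 1)) - x (u 0)) (x' (u (0 + 1)) - x' (u 0))
      have h2 := hvals (u 0) hu0
      have h3 := hvals (u 1) (le_of_lt (hui 1 le_rfl))
      have e1 : |x (u (0 + 1)) - x (u 0)| ≤ |x (u 1)| + |x (u 0)| := abs_sub _ _
      have e2 : |x' (u (0 + 1)) - x' (u 0)| ≤ |x' (u 1)| + |x' (u 0)| := abs_sub _ _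
      have : (0:ℕ) + 1 = 1 := rfl
      rw [this] at h1 e1 e2 ⊢
      linarith [h2.1, h2.2, h3.1, h3.2]
    have hrest : ∑ i ∈ Finset.range k,
        Real.sqrt ((x (u (i + 1 + 1)) - x (u (i + 1))) ^ 2 +
          (x' (u (i + 1 + 1)) - x' (u (i + 1))) ^ 2)
        ≤ 2 * (K / (α - 1) * t₀ ^ (1 - α)) := by
      have hle : ∀ i ∈ Finset.range k,
          Real.sqrt ((x (u (i + 1 + 1)) - x (u (i + 1))) ^ 2 +
            (x' (u (i + 1 + 1)) - x' (u (i + 1))) ^ 2)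
          ≤ 2 * (K / (α - 1) * (u (i + 1)) ^ (1 - α))
            - 2 * (K / (α - 1) * (u (i + 1 + 1)) ^ (1 - α)) := by
        intro i _
        have ha : t₀ < u (i + 1) := hui (i + 1) (by omega)
        have hab : u (i + 1) ≤ u (i + 1 + 1) := (hum (by omega : i + 1 < i + 1 + 1)).le
        have h1 := my_sqrt_le (x (u (i + 1 + 1)) - x (u (i + 1)))
          (x' (u (i + 1 + 1)) - x' (u (i + 1)))
        have h2 := hvarx (u (i + 1)) (u (i + 1 + 1)) ha hab
        have h3 := hvarx' (u (i + 1)) (u (i + 1 + 1)) ha hab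
        linarith
      calc ∑ i ∈ Finset.range k,
          Real.sqrt ((x (u (i + 1 + 1)) - x (u (i + 1))) ^ 2 +
            (x' (u (i + 1 + 1)) - x' (u (i + 1))) ^ 2)
          ≤ ∑ i ∈ Finset.range k,
            (2 * (K / (α - 1) * (u (i + 1)) ^ (1 - α))
              - 2 * (K / (α - 1) * (u (i + 1 + 1)) ^ (1 - α))) := Finset.sum_le_sum hle
        _ = 2 * (K / (α - 1) * (u (0 + 1)) ^ (1 - α))
            - 2 * (K / (α - 1) * (u (k + 1)) ^ (1 - α)) :=
            Finset.sum_range_sub' (fun i => 2 * (K / (α - 1) * (u (i + 1)) ^ (1 - α))) k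
        _ ≤ 2 * (K / (α - 1) * t₀ ^ (1 - α)) := by
            have ha1 : t₀ < u (0 + 1) := hui 1 le_rfl
            have hb1 : (u (0 + 1)) ^ (1 - α) ≤ t₀ ^ (1 - α) :=
              Real.rpow_le_rpow_of_nonpos ht₀ ha1.le (by linarith)
            have hb2 : (0:ℝ) ≤ K / (α - 1) * (u (k + 1)) ^ (1 - α) := by
              have : (0:ℝ) < u (k + 1) := ht₀.trans (hui (k + 1) (by omega))
              exact mul_nonneg hKα (Real.rpow_nonneg this.le _)
            have hb3 : K / (α - 1) * (u (0 + 1)) ^ (1 - α)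
                ≤ K / (α - 1) * t₀ ^ (1 - α) := mul_le_mul_of_nonneg_left hb1 hKα
            linarith
    linarith
end

section
/- Let t₀ > 0 and let p : [t₀,∞) → (0,∞) be a C² function with p′(t)/p(t) → 0 and p″(t)/p(t) → 0 as t → ∞. Set x(t) = p(t)·sin t, x′(t) = p′(t)·sin t + p(t)·cos t, and r(t) = √(x(t)² + x′(t)²) > 0. Let φ : [t₀,∞) → ℝ be a continuous function satisfying (x(t), −x′(t)) = r(t)·(cos φ(t), sin φ(t)) for all t ≥ t₀ (such φ exists and is C¹ since (x, −x′) is C¹ and never vanishes). Then φ′(t) → 1 as t → ∞, and moreover r(t)/p(t) → 1 as t → ∞. -/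
open Set Filter Real

/-- the angle function `φ` of the phase curve `(x, -x′)` of
`x(t) = p(t) sin t` satisfies `φ′(t) → 1`, and the polar radius satisfies
`r(t)/p(t) → 1`, as `t → ∞`. -/
theorem angle_derivative_tendsto_one
    (t₀ : ℝ) (ht₀ : 0 < t₀)
    (p : ℝ → ℝ)
    (hp_pos : ∀ t ≥ t₀, 0 < p t)
    (hp_smooth : ContDiffOn ℝ 2 p (Set.Ici t₀))
    (hp1 : Filter.Tendsto (fun t => deriv p t / p t) Filter.atTop (nhds 0))
    (hp2 : Filter.Tendsto (fun t => deriv (deriv p) t / p t) Filter.atTop (nhds 0))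
    (x x' r : ℝ → ℝ)
    (hx : ∀ t, x t = p t * Real.sin t)
    (hx' : ∀ t, x' t = deriv p t * Real.sin t + p t * Real.cos t)
    (hr : ∀ t, r t = Real.sqrt (x t ^ 2 + x' t ^ 2))
    (hr_pos : ∀ t ≥ t₀, 0 < r t)
    (φ : ℝ → ℝ)
    (hφ_cont : ContinuousOn φ (Set.Ici t₀))
    (hφ : ∀ t ≥ t₀, (x t, -x' t) = (r t * Real.cos (φ t), r t * Real.sin (φ t))) :
    (∀ᶠ t in Filter.atTop, DifferentiableAt ℝ φ t) ∧
    Filter.Tendsto (fun t => deriv φ t) Filter.atTop (nhds 1) ∧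
    Filter.Tendsto (fun t => r t / p t) Filter.atTop (nhds 1) := by
  -- second derivative of x
  set x'' : ℝ → ℝ := fun t =>
    deriv (deriv p) t * Real.sin t + 2 * deriv p t * Real.cos t - p t * Real.sin t with hx''def
  -- basic differentiability
  have hpd : ∀ t, t₀ < t → HasDerivAt p (deriv p t) t := by
    intro t ht
    exact (((hp_smooth.mono Set.Ioi_subset_Ici_self).contDiffAt
      (isOpen_Ioi.mem_nhds ht)).differentiableAt (by norm_num)).hasDerivAt
  have hqd : ∀ t, t₀ < t → HasDerivAt (deriv p) (deriv (deriv p) t) t := by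
    intro t ht
    have h2 : ContDiffOn ℝ 1 (deriv p) (Set.Ioi t₀) :=
      (hp_smooth.mono Set.Ioi_subset_Ici_self).deriv_of_isOpen isOpen_Ioi (by norm_num)
    exact ((h2.contDiffAt (isOpen_Ioi.mem_nhds ht)).differentiableAt (by norm_num)).hasDerivAt
  have hxe : x = fun u => p u * Real.sin u := funext hx
  have hx'e : x' = fun u => deriv p u * Real.sin u + p u * Real.cos u := funext hx'
  have hxd : ∀ t, t₀ < t → HasDerivAt x (x' t) t := by
    intro t ht
    rw [hxe, hx' t]
    exact (hpd t ht).mul (Real.hasDerivAt_sin t)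
  have hx'd : ∀ t, t₀ < t → HasDerivAt x' (x'' t) t := by
    intro t ht
    rw [hx'e]
    have h := ((hqd t ht).mul (Real.hasDerivAt_sin t)).add
      ((hpd t ht).mul (Real.hasDerivAt_cos t))
    exact h.congr_deriv (by rw [hx''def]; ring)
  -- r squared
  have hr2 : ∀ t, r t ^ 2 = x t ^ 2 + x' t ^ 2 := by
    intro t; rw [hr]; exact Real.sq_sqrt (by positivity)
  -- the complex phase curve
  set Z : ℝ → ℂ := fun t => (x t : ℂ) - (x' t : ℂ) * Complex.I with hZdef
  have hZpolar : ∀ t, t₀ ≤ t → Z t = (r t : ℂ) * Complex.exp (φ t * Complex.I) := by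
    intro t ht
    have h1 : x t = r t * Real.cos (φ t) := congrArg Prod.fst (hφ t ht)
    have h2 : -x' t = r t * Real.sin (φ t) := congrArg Prod.snd (hφ t ht)
    have : (r t : ℂ) * Complex.exp (φ t * Complex.I)
        = ((r t * Real.cos (φ t) : ℝ) : ℂ) + ((r t * Real.sin (φ t) : ℝ) : ℂ) * Complex.I := by
      rw [Complex.exp_mul_I]; push_cast; ring
    rw [this, ← h1, ← h2, hZdef]; push_cast; ring
  have hZne : ∀ t, t₀ ≤ t → Z t ≠ 0 := by
    intro t ht
    rw [hZpolar t ht]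
    exact mul_ne_zero (Complex.ofReal_ne_zero.2 (hr_pos t ht).ne') (Complex.exp_ne_zero _)
  -- key: derivative of φ
  have hφd : ∀ t₁, t₀ < t₁ →
      HasDerivAt φ ((x' t₁ ^ 2 - x t₁ * x'' t₁) / r t₁ ^ 2) t₁ := by
    intro t₁ ht₁
    have ht₁' : t₀ ≤ t₁ := ht₁.le
    have hZd : HasDerivAt Z ((x' t₁ : ℂ) - (x'' t₁ : ℂ) * Complex.I) t₁ := by
      exact ((hxd t₁ ht₁).ofReal_comp).sub (((hx'd t₁ ht₁).ofReal_comp).mul_const Complex.I)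
    set Z' : ℂ := (x' t₁ : ℂ) - (x'' t₁ : ℂ) * Complex.I with hZ'def
    set w : ℝ → ℂ := fun t => Z t / Z t₁ with hwdef
    have hw1 : w t₁ = 1 := div_self (hZne t₁ ht₁')
    have hwd : HasDerivAt w (Z' / Z t₁) t₁ := hZd.div_const _
    have hlogd : HasDerivAt (fun t => Complex.log (w t)) (Z' / Z t₁) t₁ := by
      have := hwd.clog_real (by rw [hw1]; exact Complex.one_mem_slitPlane)
      rwa [hw1, div_one] at this
    set ψ : ℝ → ℝ := fun t => φ t₁ + (Complex.log (w t)).im with hψdef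
    have hψd : HasDerivAt ψ ((Z' / Z t₁).im) t₁ := by
      have him : HasDerivAt (fun t => (Complex.log (w t)).im) ((Z' / Z t₁).im) t₁ :=
        (Complex.imCLM.hasFDerivAt.comp_hasDerivAt t₁ hlogd)
      exact HasDerivAt.const_add (φ t₁) him
    -- the derivative value
    have hval : (Z' / Z t₁).im = (x' t₁ ^ 2 - x t₁ * x'' t₁) / r t₁ ^ 2 := by
      have hns : Complex.normSq (Z t₁) = x t₁ ^ 2 + x' t₁ ^ 2 := by
        simp [hZdef, Complex.normSq_apply]; ring
      have hpos : (0:ℝ) < x t₁ ^ 2 + x' t₁ ^ 2 := by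
        rw [← hr2]; exact pow_pos (hr_pos t₁ ht₁') 2
      rw [Complex.div_im, hns, hr2]
      simp [hZ'def, hZdef]
      field_simp
      ring
    -- ψ agrees with φ near t₁
    have hψt₁ : ψ t₁ = φ t₁ := by simp [hψdef, hw1]
    have hwcont : ContinuousAt w t₁ := hwd.continuousAt
    have hψcont : ContinuousAt ψ t₁ := by
      have h1 : ContinuousAt (fun t => (Complex.log (w t)).im) t₁ :=
        Complex.continuous_im.continuousAt.comp
          ((continuousAt_clog (by rw [hw1]; exact Complex.one_mem_slitPlane)).comp hwcont)
      exact continuousAt_const.add h1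
    have hφcont' : ContinuousAt φ t₁ :=
      hφ_cont.continuousAt (mem_of_superset (isOpen_Ioi.mem_nhds ht₁) Set.Ioi_subset_Ici_self)
    have habsZ : ∀ t, t₀ ≤ t → ‖Z t‖ = r t := by
      intro t ht
      rw [hZpolar t ht, norm_mul, Complex.norm_exp_ofReal_mul_I, Complex.norm_real, Real.norm_eq_abs,
        abs_of_pos (hr_pos t ht), mul_one]
    have hint : ∀ t, t₀ ≤ t → ∃ n : ℤ, φ t - ψ t = n * (2 * π) := by
      intro t ht
      have hwne : w t ≠ 0 := div_ne_zero (hZne t ht) (hZne t₁ ht₁')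
      have habsw : ((‖w t‖ : ℝ) : ℂ) = (r t : ℂ) / (r t₁ : ℂ) := by
        rw [hwdef]; simp only [norm_div, habsZ t ht, habsZ t₁ ht₁']; push_cast; ring
      have hargw : Complex.exp ((w t).arg * Complex.I) = w t / ((r t : ℂ) / (r t₁ : ℂ)) := by
        rw [← habsw, eq_div_iff]
        · rw [mul_comm]; exact Complex.norm_mul_exp_arg_mul_I (w t)
        · rw [habsw]
          exact div_ne_zero (Complex.ofReal_ne_zero.2 (hr_pos t ht).ne')
            (Complex.ofReal_ne_zero.2 (hr_pos t₁ ht₁').ne')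
      have hexp : Complex.exp (φ t * Complex.I) = Complex.exp (ψ t * Complex.I) := by
        have hψt : (ψ t : ℂ) = (φ t₁ : ℂ) + ((w t).arg : ℂ) := by
          rw [hψdef]; push_cast [Complex.log_im]; ring
        rw [hψt, add_mul, Complex.exp_add, hargw, hwdef]
        simp only
        rw [hZpolar t ht, hZpolar t₁ ht₁']
        have e1 : Complex.exp ((φ t : ℂ) * Complex.I) ≠ 0 := Complex.exp_ne_zero _
        have e2 : Complex.exp ((φ t₁ : ℂ) * Complex.I) ≠ 0 := Complex.exp_ne_zero _
        have r1 : ((r t : ℝ) : ℂ) ≠ 0 := Complex.ofReal_ne_zero.2 (hr_pos t ht).ne'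
        have r2 : ((r t₁ : ℝ) : ℂ) ≠ 0 := Complex.ofReal_ne_zero.2 (hr_pos t₁ ht₁').ne'
        field_simp
      obtain ⟨n, hn⟩ := Complex.exp_eq_exp_iff_exists_int.mp hexp
      have h2 := congrArg Complex.im hn
      simp at h2
      exact ⟨n, by linarith⟩
    have heq : ∀ᶠ t in nhds t₁, φ t = ψ t := by
      have hten : Tendsto (fun t => φ t - ψ t) (nhds t₁) (nhds 0) := by
        have h : Tendsto (fun t => φ t - ψ t) (nhds t₁) (nhds (φ t₁ - ψ t₁)) :=
          hφcont'.sub hψcont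
        rwa [hψt₁, sub_self] at h
      have hsmall : ∀ᶠ t in nhds t₁, |φ t - ψ t| < π := by
        have := hten (Metric.ball_mem_nhds (0:ℝ) Real.pi_pos)
        filter_upwards [this] with t ht
        simpa [Real.dist_eq] using ht
      filter_upwards [hsmall, eventually_gt_nhds ht₁] with t h1 h2
      obtain ⟨n, hn⟩ := hint t h2.le
      have hn0 : n = 0 := by
        by_contra h
        have h1' : (1:ℝ) ≤ |(n:ℝ)| := by
          exact_mod_cast Int.one_le_abs (by omega)
        rw [hn, abs_mul, abs_of_pos (by positivity : (0:ℝ) < 2 * π)] at h1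
        nlinarith [Real.pi_pos]
      rw [hn0] at hn
      simp at hn
      linarith [hn]
    rw [← hval]
    exact hψd.congr_of_eventuallyEq (heq.mono fun t ht => ht)
  -- limits
  have hev : ∀ᶠ t in atTop, t₀ < t := eventually_gt_atTop t₀
  have hdiff : ∀ᶠ t in atTop, DifferentiableAt ℝ φ t :=
    hev.mono fun t ht => (hφd t ht).differentiableAt
  -- auxiliary limits
  set a : ℝ → ℝ := fun t => deriv p t / p t with hadef
  set b : ℝ → ℝ := fun t => deriv (deriv p) t / p t with hbdef
  -- numerator and denominator identities
  have hNid : ∀ t, t₀ < t →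
      (x' t ^ 2 - x t * x'' t) / p t ^ 2 = 1 + (a t ^ 2 - b t) * Real.sin t ^ 2 := by
    intro t ht
    have hp0 : p t ≠ 0 := (hp_pos t ht.le).ne'
    rw [hx, hx', hx''def, hadef, hbdef]
    field_simp
    linear_combination (p t) ^ 2 * Real.sin_sq_add_cos_sq t
  have hDid : ∀ t, t₀ < t →
      (x t ^ 2 + x' t ^ 2) / p t ^ 2
        = 1 + a t ^ 2 * Real.sin t ^ 2 + 2 * a t * Real.sin t * Real.cos t := by
    intro t ht
    have hp0 : p t ≠ 0 := (hp_pos t ht.le).ne'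
    rw [hx, hx', hadef]
    field_simp
    linear_combination (p t) ^ 2 * Real.sin_sq_add_cos_sq t
  -- limits of the model functions
  have ha2 : Tendsto (fun t => a t ^ 2) atTop (nhds 0) := by
    have := hp1.mul hp1
    simpa [hadef, pow_two] using this
  have hN : Tendsto (fun t => 1 + (a t ^ 2 - b t) * Real.sin t ^ 2) atTop (nhds 1) := by
    have h0 : Tendsto (fun t => (a t ^ 2 - b t) * Real.sin t ^ 2) atTop (nhds 0) := by
      have hg : Tendsto (fun t => |a t ^ 2 - b t|) atTop (nhds 0) := by
        have h1 : Tendsto (fun t => a t ^ 2 - b t) atTop (nhds 0) := by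
          simpa using ha2.sub hp2
        simpa using h1.abs
      refine squeeze_zero_norm (fun t => ?_) hg
      rw [Real.norm_eq_abs, abs_mul]
      have h2 : |Real.sin t ^ 2| ≤ 1 := by
        rw [abs_of_nonneg (sq_nonneg _)]
        exact Real.sin_sq_le_one t
      exact mul_le_of_le_one_right (abs_nonneg _) h2
    have := h0.const_add 1
    simpa using this
  have hD : Tendsto (fun t => 1 + a t ^ 2 * Real.sin t ^ 2 + 2 * a t * Real.sin t * Real.cos t)
      atTop (nhds 1) := by
    have h0 : Tendsto (fun t => a t ^ 2 * Real.sin t ^ 2 + 2 * a t * Real.sin t * Real.cos t)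
        atTop (nhds 0) := by
      have hg : Tendsto (fun t => a t ^ 2 + 2 * |a t|) atTop (nhds 0) := by
        have h1 : Tendsto (fun t => |a t|) atTop (nhds 0) := by simpa using hp1.abs
        simpa using ha2.add (h1.const_mul 2)
      refine squeeze_zero_norm (fun t => ?_) hg
      · skip
        have hs : |Real.sin t| ≤ 1 := Real.abs_sin_le_one t
        have hc : |Real.cos t| ≤ 1 := Real.abs_cos_le_one t
        rw [Real.norm_eq_abs]
        calc |a t ^ 2 * Real.sin t ^ 2 + 2 * a t * Real.sin t * Real.cos t|
            ≤ |a t ^ 2 * Real.sin t ^ 2| + |2 * a t * Real.sin t * Real.cos t| := abs_add_le _ _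
          _ ≤ a t ^ 2 + 2 * |a t| := by
              rw [abs_mul, abs_mul, abs_mul, abs_mul]
              have h1 : |a t ^ 2| = a t ^ 2 := abs_of_nonneg (sq_nonneg _)
              have h2 : |Real.sin t ^ 2| ≤ 1 := by
                rw [abs_of_nonneg (sq_nonneg _)]; exact Real.sin_sq_le_one t
              have h3 : |(2:ℝ)| = 2 := by norm_num
              have t1 : |a t ^ 2| * |Real.sin t ^ 2| ≤ a t ^ 2 := by
                rw [h1]; exact mul_le_of_le_one_right (sq_nonneg _) h2
              have t2 : |(2:ℝ)| * |a t| * |Real.sin t| * |Real.cos t| ≤ 2 * |a t| := by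
                rw [h3]
                have h4 : 2 * |a t| * |Real.sin t| * |Real.cos t|
                    = 2 * |a t| * (|Real.sin t| * |Real.cos t|) := by ring
                rw [h4]
                apply mul_le_of_le_one_right (by positivity)
                exact mul_le_one₀ hs (abs_nonneg _) hc
              linarith
    have := h0.const_add 1
    simpa [add_assoc] using this
  -- deriv φ tends to 1
  have hderiv_eq : ∀ᶠ t in atTop,
      deriv φ t = (1 + (a t ^ 2 - b t) * Real.sin t ^ 2)
        / (1 + a t ^ 2 * Real.sin t ^ 2 + 2 * a t * Real.sin t * Real.cos t) := by
    filter_upwards [hev] with t ht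
    have hp0 : p t ≠ 0 := (hp_pos t ht.le).ne'
    have hpos : (0:ℝ) < x t ^ 2 + x' t ^ 2 := by
      rw [← hr2]; exact pow_pos (hr_pos t ht.le) 2
    rw [(hφd t ht).deriv, ← hNid t ht, ← hDid t ht, hr2,
      div_div_div_cancel_right₀ (pow_ne_zero 2 hp0)]
  have hderiv : Tendsto (fun t => deriv φ t) atTop (nhds 1) := by
    have := hN.div hD one_ne_zero
    rw [div_one] at this
    exact Tendsto.congr' (hderiv_eq.mono fun t ht => ht.symm) this
  -- r / p tends to 1
  have hrp : Tendsto (fun t => r t / p t) atTop (nhds 1) := by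
    have hsq : ∀ᶠ t in atTop, r t / p t
        = Real.sqrt (1 + a t ^ 2 * Real.sin t ^ 2 + 2 * a t * Real.sin t * Real.cos t) := by
      filter_upwards [hev] with t ht
      rw [← hDid t ht, hr]
      rw [Real.sqrt_div (by positivity) (p t ^ 2), Real.sqrt_sq (hp_pos t ht.le).le]
    have : Tendsto (fun t => Real.sqrt
        (1 + a t ^ 2 * Real.sin t ^ 2 + 2 * a t * Real.sin t * Real.cos t)) atTop (nhds 1) := by
      have := (Real.continuous_sqrt.continuousAt (x := (1:ℝ))).tendsto.comp hD
      rw [Real.sqrt_one] at this; exact this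
    exact Tendsto.congr' (hsq.mono fun t ht => ht.symm) this
  exact ⟨hdiff, hderiv, hrp⟩
end

section
/- Let α ∈ (0,1), t₀ > 0, and let p : [t₀,∞) → (0,∞) be a C¹ function with p(t)·t^{α} → 1 and p′(t)/(−α t^{−α−1}) → 1 as t → ∞, and such that 1 + (p′(t)/p(t))²·sin²t + (p′(t)/p(t))·sin 2t > 0 for all t ≥ t₀. Define r(t) = p(t)·√(1 + (p′(t)/p(t))²·sin²t + (p′(t)/p(t))·sin 2t) for t ∈ [t₀,∞). Let C ∈ ℝ, φ₁ > 0, and let t(·) : [φ₁,∞) → [t₀,∞) be a function for which there exists K > 0 with |t(φ) − φ − C| ≤ K/φ for all φ ≥ φ₁. Then for every Δφ > 1 there exist a constant k > 0 and φ₂ ≥ φ₁ such that for all φ ≥ φ₂: r(t(φ)) − r(t(φ + Δφ)) ≥ k·φ^{−α−1}. -/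
open Set Filter Real

/-- Auxiliary scalar inequality used in `wavy_radius_decay`. -/
lemma wavy_aux_ineq (a d D : ℝ) (ha : 0 < a) (hD : 1 < D) (hd : 0 < d)
    (hd2 : d ≤ 1/2) (hds : d*(64+4*D) ≤ D-1) :
    a*(D-1)/2 ≤ ((1-d)*a)*(1-d)*(D-d) - 2*(a/2*(1+d)^4*(1+d)) := by
  have h2 : d^2 ≤ d/2 := by nlinarith
  have h3 : d^3 ≤ d/4 := by nlinarith [mul_le_mul_of_nonneg_left h2 hd.le]
  have h4 : d^4 ≤ d/8 := by nlinarith [mul_le_mul_of_nonneg_left h3 hd.le]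
  have h5 : d^5 ≤ d/16 := by nlinarith [mul_le_mul_of_nonneg_left h4 hd.le]
  have e5 : (1+d)^5 ≤ 1 + 18*d := by nlinarith [h2, h3, h4, h5]
  have e2 : (1-2*d)*(D-d) ≤ (1-d)*(1-d)*(D-d) := by nlinarith
  have h9 : (D-1)/2 ≤ (1-d)*(1-d)*(D-d) - (1+d)^5 := by nlinarith
  nlinarith [h9, ha]

/-- Auxiliary square-root estimate used in `wavy_radius_decay`. -/
lemma wavy_sqrt_bound (u : ℝ) (hpos : 0 < 1 + u) :
    |Real.sqrt (1 + u) - 1| ≤ |u|/2 + u^2/2 := by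
  set s : ℝ := Real.sqrt (1 + u) with hsdef
  have hs0 : 0 ≤ s := Real.sqrt_nonneg _
  have hss : s^2 = 1 + u := Real.sq_sqrt hpos.le
  have hfac : (s-1)^2 * (s+1)^2 = u^2 := by linear_combination (s^2 - 1 + u) * hss
  have hone : 1 ≤ (s+1)^2 := by nlinarith [hs0, sq_nonneg s]
  have hsq : (s-1)^2 ≤ u^2 := by nlinarith [mul_le_mul_of_nonneg_left hone (sq_nonneg (s-1))]
  have hid : s - 1 = u/2 - (s-1)^2/2 := by linear_combination hss / 2
  rw [abs_le]
  constructor <;> nlinarith [le_abs_self u, neg_abs_le u, hsq, sq_nonneg (s-1)]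

set_option maxHeartbeats 3200000

/-- Lemma `tehnicka2`. For the polar radius
`r(t) = p(t)√(1 + (p′/p)² sin²t + (p′/p) sin 2t)` with `p(t) ∼₁ t^{-α}`, `α ∈ (0,1)`,
and `t(φ) = φ + C + O(φ^{-1})`, for each `Δφ > 1` there is `k > 0` such that
`r(t(φ)) − r(t(φ + Δφ)) ≥ k φ^{-α-1}` for all sufficiently large `φ`. -/
theorem wavy_radius_decay
    (α t₀ : ℝ) (hα : α ∈ Set.Ioo (0 : ℝ) 1) (ht₀ : 0 < t₀)
    (p : ℝ → ℝ)
    (hp_pos : ∀ t ≥ t₀, 0 < p t)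
    (hp_smooth : ContDiffOn ℝ 1 p (Set.Ici t₀))
    -- p(t) ∼₁ t^{-α} as t → ∞
    (hp0 : Filter.Tendsto (fun t => p t * t ^ α) Filter.atTop (nhds 1))
    (hp1 : Filter.Tendsto (fun t => deriv p t / (-α * t ^ (-α - 1)))
      Filter.atTop (nhds 1))
    (hpos : ∀ t ≥ t₀, 0 < 1 + (deriv p t / p t) ^ 2 * Real.sin t ^ 2 +
      (deriv p t / p t) * Real.sin (2 * t))
    (r : ℝ → ℝ)
    (hr : ∀ t, r t = p t * Real.sqrt (1 + (deriv p t / p t) ^ 2 * Real.sin t ^ 2 +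
      (deriv p t / p t) * Real.sin (2 * t)))
    (C φ₁ : ℝ) (hφ₁ : 0 < φ₁)
    (tf : ℝ → ℝ)
    (htf_mem : ∀ φ ≥ φ₁, t₀ ≤ tf φ)
    (K : ℝ) (hK : 0 < K)
    (htf : ∀ φ ≥ φ₁, |tf φ - φ - C| ≤ K / φ) :
    ∀ Δφ : ℝ, 1 < Δφ → ∃ k : ℝ, 0 < k ∧ ∃ φ₂ : ℝ, φ₁ ≤ φ₂ ∧
      ∀ φ ≥ φ₂, k * φ ^ (-α - 1) ≤ r (tf φ) - r (tf (φ + Δφ)) := by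
  obtain ⟨hα0, hα1⟩ := hα
  intro Δφ hΔφ
  set δ : ℝ := min (1/2) ((Δφ - 1) / (64 + 4*Δφ)) with hδdef
  have hΔ0 : (0:ℝ) < 64 + 4*Δφ := by linarith
  have hδpos : 0 < δ := lt_min (by norm_num) (div_pos (by linarith) hΔ0)
  have hδle : δ ≤ 1/2 := min_le_left _ _
  have hδsmall : δ * (64 + 4*Δφ) ≤ Δφ - 1 := by
    have := min_le_right (1/2 : ℝ) ((Δφ - 1) / (64 + 4*Δφ))
    rw [← hδdef] at this
    calc δ * (64 + 4*Δφ) ≤ ((Δφ - 1) / (64 + 4*Δφ)) * (64 + 4*Δφ) := by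
          exact mul_le_mul_of_nonneg_right this hΔ0.le
      _ = Δφ - 1 := by field_simp
  set δ₁ : ℝ := δ/3 with hδ₁def
  have hδ₁pos : 0 < δ₁ := by positivity
  clear_value δ₁
  clear_value δ
  -- eventually-in-t facts
  have E0 : ∀ᶠ t in atTop, p t ≤ (1+δ₁) * t ^ (-α) ∧ (1-δ₁) * t ^ (-α) ≤ p t := by
    have h := hp0.eventually (Metric.ball_mem_nhds (1:ℝ) hδ₁pos)
    filter_upwards [h, eventually_gt_atTop 0] with t ht htpos
    rw [Real.dist_eq, abs_sub_lt_iff] at ht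
    have h1 : (0:ℝ) < t ^ α := Real.rpow_pos_of_pos htpos _
    have h2 : t ^ (-α) = (t ^ α)⁻¹ := by rw [← Real.rpow_neg htpos.le]
    rw [h2]
    constructor
    · rw [mul_comm, ← div_eq_inv_mul, le_div_iff₀ h1]; nlinarith [ht.1]
    · rw [mul_comm, ← div_eq_inv_mul, div_le_iff₀ h1]; nlinarith [ht.2]
  have E1 : ∀ᶠ t in atTop, deriv p t ≤ -((1-δ₁)*α) * t ^ (-α-1) ∧
      -((1+δ₁)*α) * t ^ (-α-1) ≤ deriv p t := by
    have h := hp1.eventually (Metric.ball_mem_nhds (1:ℝ) hδ₁pos)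
    filter_upwards [h, eventually_gt_atTop 0] with t ht htpos
    rw [Real.dist_eq, abs_sub_lt_iff] at ht
    have h1 : (0:ℝ) < t ^ (-α-1) := Real.rpow_pos_of_pos htpos _
    have h2 : -α * t ^ (-α-1) ≠ 0 := by nlinarith
    have hd : deriv p t = (deriv p t / (-α * t ^ (-α-1))) * (-α * t ^ (-α-1)) := by
      field_simp
    have key1 : (1 - δ₁) * (α * t ^ (-α-1)) ≤
        (deriv p t / (-α * t ^ (-α-1))) * (α * t ^ (-α-1)) :=
      mul_le_mul_of_nonneg_right (by linarith [ht.2]) (by positivity)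
    have key2 : (deriv p t / (-α * t ^ (-α-1))) * (α * t ^ (-α-1)) ≤
        (1 + δ₁) * (α * t ^ (-α-1)) :=
      mul_le_mul_of_nonneg_right (by linarith [ht.1]) (by positivity)
    constructor <;> rw [hd] <;> nlinarith [key1, key2]
  obtain ⟨T, hT⟩ := eventually_atTop.mp
    (E0.and (E1.and ((eventually_ge_atTop t₀).and ((eventually_ge_atTop (1:ℝ)).and
      (eventually_ge_atTop (3*α/δ))))))
  have htpos : ∀ t, T ≤ t → (0:ℝ) < t := fun t ht =>
    lt_of_lt_of_le zero_lt_one (hT t ht).2.2.2.1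
  have hmain : ∀ t, T ≤ t → deriv p t ≤ -((1-δ)*α) * t ^ (-α-1) := by
    intro t ht
    have h := (hT t ht).2.1.1
    have h1 : (0:ℝ) < t ^ (-α-1) := Real.rpow_pos_of_pos (htpos t ht) _
    have hd : δ₁ ≤ δ := by rw [hδ₁def]; linarith
    nlinarith [mul_pos hα0 h1]
  have hcorr : ∀ t, T ≤ t → |r t - p t| ≤ α/2*(1+δ)^4 * t ^ (-α-1) := by
    intro t ht
    obtain ⟨⟨hpu, hpl⟩, ⟨hdu, hdl⟩, ht₀t, h1t, h3t⟩ := hT t ht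
    have ht0 : (0:ℝ) < t := lt_of_lt_of_le zero_lt_one h1t
    have hd₁ : δ₁ ≤ δ := by rw [hδ₁def]; linarith
    have hTm : t ^ (-α-1) = t ^ (-α) * t⁻¹ := by
      rw [← Real.rpow_neg_one t, ← Real.rpow_add ht0]; ring_nf
    have hta : (0:ℝ) < t ^ (-α) := Real.rpow_pos_of_pos ht0 _
    have htb : (0:ℝ) < t ^ (-α-1) := Real.rpow_pos_of_pos ht0 _
    have hpt : 0 < p t := hp_pos t ht₀t
    set q : ℝ := deriv p t / p t with hq
    have hdabs : |deriv p t| ≤ (1+δ₁)*α * t ^ (-α-1) := by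
      rw [abs_le]; constructor <;> nlinarith
    have hql : |q| ≤ (1+δ)*α/t := by
      rw [hq, abs_div, abs_of_pos hpt, div_le_div_iff₀ hpt ht0]
      calc |deriv p t| * t ≤ ((1+δ₁)*α * t ^ (-α-1)) * t :=
            mul_le_mul_of_nonneg_right hdabs ht0.le
        _ = (1+δ₁)*α * t ^ (-α) := by rw [hTm]; field_simp
        _ ≤ ((1+δ)*α) * ((1-δ₁) * t ^ (-α)) := by
            have hcoef : (1+δ₁) ≤ (1+δ)*(1-δ₁) := by rw [hδ₁def]; nlinarith
            nlinarith [mul_le_mul_of_nonneg_right hcoef (mul_pos hα0 hta).le]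
        _ ≤ (1+δ)*α * p t := by
            apply mul_le_mul_of_nonneg_left hpl; nlinarith
    have hq2 : |q| ≤ δ/2 := by
      refine hql.trans ?_
      rw [div_le_iff₀ ht0]
      have h8 : 3*α ≤ t*δ := (div_le_iff₀ hδpos).mp h3t
      nlinarith
    set u : ℝ := q^2 * Real.sin t ^ 2 + q * Real.sin (2*t) with hu
    have hs2 : |Real.sin (2*t)| ≤ 1 :=
      abs_le.mpr ⟨Real.neg_one_le_sin _, Real.sin_le_one _⟩
    have hs1 : Real.sin t ^ 2 ≤ 1 := Real.sin_sq_le_one t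
    have hu1 : |u| ≤ q^2 + |q| := by
      calc |u| ≤ |q^2 * Real.sin t ^ 2| + |q * Real.sin (2*t)| := abs_add_le _ _
        _ ≤ q^2 + |q| := by
            have e1 : |q^2 * Real.sin t ^ 2| = q^2 * Real.sin t ^ 2 :=
              abs_of_nonneg (by positivity)
            rw [e1, abs_mul]
            nlinarith [sq_nonneg q, abs_nonneg q, sq_nonneg (Real.sin t)]
    have huδ : |u| ≤ δ := by nlinarith [hu1, hq2, abs_nonneg q, sq_abs q]
    have h1u : 1 + (deriv p t / p t)^2 * Real.sin t ^ 2 +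
        (deriv p t / p t) * Real.sin (2*t) = 1 + u := by rw [hu, hq]; ring
    have hposu : 0 < 1 + u := h1u ▸ hpos t ht₀t
    set s : ℝ := Real.sqrt (1+u) with hsdef
    have habs : |s - 1| ≤ |u|/2 + u^2/2 := wavy_sqrt_bound u hposu
    have hru : r t - p t = p t * (s - 1) := by
      rw [hr t, h1u, ← hsdef]; ring
    have hfinal : |r t - p t| ≤ p t * (|u|/2 + u^2/2) := by
      rw [hru, abs_mul, abs_of_pos hpt]
      exact mul_le_mul_of_nonneg_left habs hpt.le
    have huB : |u| ≤ (1+δ)^2*α/t := by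
      have h10 : |q| * (1 + |q|) ≤ ((1+δ)*α/t) * (1+δ) :=
        mul_le_mul hql (by linarith) (by positivity) (by positivity)
      have h11 : ((1+δ)*α/t) * (1+δ) = (1+δ)^2*α/t := by ring
      nlinarith [sq_abs q, hu1]
    have h6 : |u|/2 + u^2/2 ≤ ((1+δ)^2*α/t) * (1+δ) / 2 := by
      have h12 : |u| * (1 + |u|) ≤ ((1+δ)^2*α/t) * (1+δ) :=
        mul_le_mul huB (by linarith) (by positivity) (by positivity)
      nlinarith [sq_abs u]
    calc |r t - p t| ≤ p t * (|u|/2 + u^2/2) := hfinal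
      _ ≤ ((1+δ) * t ^ (-α)) * (((1+δ)^2*α/t) * (1+δ) / 2) := by
          apply mul_le_mul ?_ h6 (by positivity) (by positivity)
          calc p t ≤ (1+δ₁) * t ^ (-α) := hpu
            _ ≤ (1+δ) * t ^ (-α) := by nlinarith
      _ = α/2*(1+δ)^4 * t ^ (-α-1) := by rw [hTm]; field_simp
  -- eventually-in-φ facts
  set M : ℝ := |C| + 1 + Δφ with hM
  have hMpos : 0 < M := by have := abs_nonneg C; rw [hM]; linarith
  have hrat : ∀ a : ℝ, Tendsto (fun φ : ℝ => ((φ + a)/φ) ^ (-α-1)) atTop (nhds 1) := by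
    intro a
    have h1 : Tendsto (fun φ : ℝ => (φ + a)/φ) atTop (nhds 1) := by
      have h2 : Tendsto (fun φ : ℝ => 1 + a/φ) atTop (nhds 1) := by
        simpa using (tendsto_const_nhds (x := (1:ℝ)) (f := atTop)).add
          ((tendsto_const_nhds (x := a) (f := atTop)).div_atTop tendsto_id)
      apply h2.congr'
      filter_upwards [eventually_ne_atTop 0] with φ hφ
      field_simp
    have h3 : ContinuousAt (fun x : ℝ => x ^ (-α-1)) 1 :=
      Real.continuousAt_rpow_const 1 _ (Or.inl one_ne_zero)
    have := h3.tendsto.comp h1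
    simpa [Real.one_rpow, Function.comp_def] using this
  have F1 : ∀ᶠ φ : ℝ in atTop, (φ - M) ^ (-α-1) ≤ (1+δ) * φ ^ (-α-1) := by
    have h := (hrat (-M)).eventually (eventually_le_nhds (by linarith : (1:ℝ) < 1 + δ))
    filter_upwards [h, eventually_gt_atTop M, eventually_gt_atTop 0] with φ h1 h2 h3
    have h4 : (0:ℝ) < φ ^ (-α-1) := Real.rpow_pos_of_pos h3 _
    rw [show φ + -M = φ - M by ring, Real.div_rpow (by linarith) h3.le,
      div_le_iff₀ h4] at h1
    linarith
  have F2 : ∀ᶠ φ : ℝ in atTop, (1-δ) * φ ^ (-α-1) ≤ (φ + M) ^ (-α-1) := by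
    have h := (hrat M).eventually (eventually_ge_nhds (by linarith : 1 - δ < 1))
    filter_upwards [h, eventually_gt_atTop 0] with φ h1 h3
    have h4 : (0:ℝ) < φ ^ (-α-1) := Real.rpow_pos_of_pos h3 _
    rw [Real.div_rpow (by linarith) h3.le, le_div_iff₀ h4] at h1
    linarith
  have Gev : ∀ᶠ φ : ℝ in atTop, φ₁ ≤ φ ∧ 2*K/δ ≤ φ ∧ M + T + 1 ≤ φ ∧ M + 1 ≤ φ ∧
      ((φ - M) ^ (-α-1) ≤ (1+δ) * φ ^ (-α-1)) ∧
      ((1-δ) * φ ^ (-α-1) ≤ (φ + M) ^ (-α-1)) := by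
    filter_upwards [eventually_ge_atTop φ₁, eventually_ge_atTop (2*K/δ),
      eventually_ge_atTop (M+T+1), eventually_ge_atTop (M+1), F1, F2] with φ a b c d e f
    exact ⟨a, b, c, d, e, f⟩
  obtain ⟨φ₂', hφ₂'⟩ := eventually_atTop.mp Gev
  refine ⟨α*(Δφ-1)/2, div_pos (mul_pos hα0 (by linarith)) two_pos,
    max φ₂' φ₁, le_max_right _ _, ?_⟩
  intro φ hφ
  obtain ⟨hφ1, hKφ, hMT, hM1, hF1, hF2⟩ := hφ₂' φ (le_trans (le_max_left _ _) hφ)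
  have hφpos : 0 < φ := by linarith
  set t1 := tf φ with ht1d
  set t2 := tf (φ + Δφ) with ht2d
  have hb1 : |t1 - φ - C| ≤ K/φ := htf φ hφ1
  have hφΔ : φ₁ ≤ φ + Δφ := by linarith
  have hb2 : |t2 - (φ + Δφ) - C| ≤ K/(φ + Δφ) := htf _ hφΔ
  have hKδ : K/φ ≤ δ/2 := by
    rw [div_le_iff₀ hφpos]
    have h13 := (div_le_iff₀ hδpos).mp hKφ
    nlinarith
  have hK2 : K/(φ + Δφ) ≤ K/φ := by gcongr <;> linarith
  rw [abs_le] at hb1 hb2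
  have hKδ1 : K/φ ≤ 1 := by linarith
  have hCl := neg_abs_le C
  have hCu := le_abs_self C
  have ht1l : φ - M ≤ t1 := by rw [hM] at *; linarith [hb1.1]
  have ht1u : t1 ≤ φ + M := by rw [hM] at *; linarith [hb1.2]
  have ht2l : φ - M ≤ t2 := by rw [hM] at *; linarith [hb2.1, hK2]
  have ht2u : t2 ≤ φ + M := by rw [hM] at *; linarith [hb2.2, hK2]
  have ht12 : Δφ - δ ≤ t2 - t1 := by linarith [hb1.2, hb2.1, hK2, hKδ]
  have hlt : t1 < t2 := by linarith
  have hTt1 : T ≤ t1 := by linarith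
  have hTt2 : T ≤ t2 := by linarith
  have hsub : Icc t1 t2 ⊆ Ici t₀ := fun x hx =>
    le_trans (hT t1 hTt1).2.2.1 hx.1
  have hcont : ContinuousOn p (Icc t1 t2) := hp_smooth.continuousOn.mono hsub
  have hdiff : DifferentiableOn ℝ p (Ioo t1 t2) := by
    intro x hx
    have hxt₀ : t₀ < x := lt_of_le_of_lt (hT t1 hTt1).2.2.1 hx.1
    exact ((hp_smooth.differentiableOn one_ne_zero).differentiableAt
      (Ici_mem_nhds hxt₀)).differentiableWithinAt
  obtain ⟨ξ, hξ, hξeq⟩ := exists_deriv_eq_slope p hlt hcont hdiff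
  have hξT : T ≤ ξ := le_trans hTt1 hξ.1.le
  have hξpos : 0 < ξ := htpos ξ hξT
  have hmainξ : deriv p ξ ≤ -((1-δ)*α) * ξ ^ (-α-1) := hmain ξ hξT
  have hξu : ξ ≤ φ + M := le_trans hξ.2.le ht2u
  have hφM : (0:ℝ) < φ - M := by linarith
  have hmono : (φ + M) ^ (-α-1) ≤ ξ ^ (-α-1) :=
    Real.rpow_le_rpow_of_nonpos hξpos hξu (by linarith)
  have hstep : (1-δ) * φ ^ (-α-1) ≤ ξ ^ (-α-1) := le_trans hF2 hmono
  have hP : (0:ℝ) < φ ^ (-α-1) := Real.rpow_pos_of_pos hφpos _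
  have hAnn : 0 ≤ (1-δ)*α * ((1-δ) * φ ^ (-α-1)) :=
    mul_nonneg (mul_nonneg (by linarith) hα0.le) (mul_nonneg (by linarith) hP.le)
  have hd0 : (1-δ)*α * ((1-δ) * φ ^ (-α-1)) ≤ -deriv p ξ := by
    have h14 : (1-δ)*α * ((1-δ) * φ ^ (-α-1)) ≤ (1-δ)*α * ξ ^ (-α-1) :=
      mul_le_mul_of_nonneg_left hstep (mul_nonneg (by linarith) hα0.le)
    linarith
  have hslope : p t2 - p t1 = deriv p ξ * (t2 - t1) := by
    have hne : t2 - t1 ≠ 0 := ne_of_gt (by linarith)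
    rw [hξeq, div_mul_cancel₀ _ hne]
  have hmainterm : ((1-δ)*α) * ((1-δ) * φ ^ (-α-1)) * (Δφ - δ) ≤ p t1 - p t2 := by
    have h7 : ((1-δ)*α) * ((1-δ) * φ ^ (-α-1)) * (Δφ - δ) ≤ (-deriv p ξ) * (t2 - t1) :=
      mul_le_mul hd0 ht12 (by linarith) (by linarith)
    have h7' : (-deriv p ξ) * (t2 - t1) = -(deriv p ξ * (t2 - t1)) := by ring
    linarith [h7, hslope, h7']
  have hcnn : (0:ℝ) ≤ α/2*(1+δ)^4 := mul_nonneg (by linarith) (by positivity)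
  have hc1 : |r t1 - p t1| ≤ α/2*(1+δ)^4 * ((1+δ) * φ ^ (-α-1)) := by
    calc |r t1 - p t1| ≤ α/2*(1+δ)^4 * t1 ^ (-α-1) := hcorr t1 hTt1
      _ ≤ α/2*(1+δ)^4 * (φ - M) ^ (-α-1) :=
          mul_le_mul_of_nonneg_left
            (Real.rpow_le_rpow_of_nonpos hφM ht1l (by linarith)) hcnn
      _ ≤ α/2*(1+δ)^4 * ((1+δ) * φ ^ (-α-1)) := mul_le_mul_of_nonneg_left hF1 hcnn
  have hc2 : |r t2 - p t2| ≤ α/2*(1+δ)^4 * ((1+δ) * φ ^ (-α-1)) := by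
    calc |r t2 - p t2| ≤ α/2*(1+δ)^4 * t2 ^ (-α-1) := hcorr t2 hTt2
      _ ≤ α/2*(1+δ)^4 * (φ - M) ^ (-α-1) :=
          mul_le_mul_of_nonneg_left
            (Real.rpow_le_rpow_of_nonpos hφM ht2l (by linarith)) hcnn
      _ ≤ α/2*(1+δ)^4 * ((1+δ) * φ ^ (-α-1)) := mul_le_mul_of_nonneg_left hF1 hcnn
  have hineq : α*(Δφ-1)/2 ≤ ((1-δ)*α)*(1-δ)*(Δφ-δ) - 2*(α/2*(1+δ)^4*(1+δ)) :=
    wavy_aux_ineq α δ Δφ hα0 hΔφ hδpos hδle hδsmall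
  calc α*(Δφ-1)/2 * φ ^ (-α-1)
      ≤ (((1-δ)*α)*(1-δ)*(Δφ-δ) - 2*(α/2*(1+δ)^4*(1+δ))) * φ ^ (-α-1) :=
        mul_le_mul_of_nonneg_right hineq hP.le
    _ = ((1-δ)*α) * ((1-δ) * φ ^ (-α-1)) * (Δφ - δ)
        - 2*(α/2*(1+δ)^4 * ((1+δ) * φ ^ (-α-1))) := by ring
    _ ≤ r t1 - r t2 := by
        have l1 := (abs_le.mp hc1).1
        have l2 := (abs_le.mp hc2).2
        linarith [hmainterm]
end
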